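/- arXiv:1511.08628 — 13 statements merged into one kernel-verified Lean document; each statement's English description precedes it below -/
import Mathlib

section
/- Let I ⊆ ℝ² be a nonempty bounded set and let (u_req_i) and (u_imp_i), i = 1, …, k, be sequences with values in I. Suppose there are indices 1 < i_1 < i_2 < … < i_L ≤ k such that u_req_i = u_imp_i for every i ∈ {1, …, k} \ {i_1, …, i_L}, u_req_{i_ℓ} ≠ u_imp_{i_ℓ} for every ℓ ∈ {1, …, L}, and u_imp_{i_{ℓ+1}} = u_req_{i_ℓ} for every ℓ ∈ {1, …, L−1}. Then the accumulated error satisfies e_k = u_imp_{i_1} − u_req_{i_L}, and consequently ‖e_k‖ ≤ diam I, where diam I := sup{‖v − w‖ : v, w ∈ I}. -/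
set_option maxHeartbeats 1000000


/-- For a resource with delay whose request/implementation sequences take
values in a nonempty bounded set `I ⊆ ℝ²` and differ exactly at indices
`1 < i_1 < … < i_L ≤ k` with the telescoping property `u_imp_{i_{ℓ+1}} = u_req_{i_ℓ}`,
the accumulated error satisfies `e_k = u_imp_{i_1} − u_req_{i_L}` and `‖e_k‖ ≤ diam I`. -/
theorem stmt1 (I : Set (EuclideanSpace ℝ (Fin 2))) (hne : I.Nonempty)
    (hbdd : Bornology.IsBounded I)
    (k : ℕ) (u_req u_imp : ℕ → EuclideanSpace ℝ (Fin 2))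
    (hreqI : ∀ i ∈ Finset.Icc 1 k, u_req i ∈ I)
    (himpI : ∀ i ∈ Finset.Icc 1 k, u_imp i ∈ I)
    (L : ℕ) (hL : 1 ≤ L) (idx : Fin L → ℕ) (hmono : StrictMono idx)
    (h1 : 1 < idx ⟨0, by omega⟩) (hk : idx ⟨L - 1, by omega⟩ ≤ k)
    (heq : ∀ i ∈ Finset.Icc 1 k, (∀ ℓ : Fin L, i ≠ idx ℓ) → u_req i = u_imp i)
    (hneq : ∀ ℓ : Fin L, u_req (idx ℓ) ≠ u_imp (idx ℓ))
    (hchain : ∀ ℓ : Fin L, ∀ h : (ℓ : ℕ) + 1 < L,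
      u_imp (idx ⟨(ℓ : ℕ) + 1, h⟩) = u_req (idx ℓ)) :
    (∑ i ∈ Finset.Icc 1 k, (u_imp i - u_req i)) =
        u_imp (idx ⟨0, by omega⟩) - u_req (idx ⟨L - 1, by omega⟩) ∧
    ‖∑ i ∈ Finset.Icc 1 k, (u_imp i - u_req i)‖ ≤ Metric.diam I := by
  have hL0 : 0 < L := hL
  -- every idx ℓ lies in Icc 1 k
  have hmem : ∀ ℓ : Fin L, idx ℓ ∈ Finset.Icc 1 k := by
    intro ℓ
    have h0le : idx ⟨0, hL0⟩ ≤ idx ℓ := hmono.monotone (by simp [Fin.le_def])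
    have hle : idx ℓ ≤ idx ⟨L - 1, by omega⟩ :=
      hmono.monotone (by simp [Fin.le_def]; omega)
    exact Finset.mem_Icc.2 ⟨by omega, le_trans hle hk⟩
  have hinj : Function.Injective idx := hmono.injective
  -- reduce sum to sum over image of idx
  have hsub : Finset.univ.image idx ⊆ Finset.Icc 1 k := by
    intro x hx
    rcases Finset.mem_image.1 hx with ⟨ℓ, _, rfl⟩
    exact hmem ℓ
  have hsum1 : (∑ i ∈ Finset.Icc 1 k, (u_imp i - u_req i)) =
      ∑ i ∈ Finset.univ.image idx, (u_imp i - u_req i) := by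
    refine (Finset.sum_subset hsub ?_).symm
    intro x hx hnx
    have : u_req x = u_imp x := by
      refine heq x hx ?_
      intro ℓ hxe
      exact hnx (Finset.mem_image.2 ⟨ℓ, Finset.mem_univ _, hxe.symm⟩)
    rw [this, sub_self]
  have hsum2 : (∑ i ∈ Finset.univ.image idx, (u_imp i - u_req i)) =
      ∑ ℓ : Fin L, (u_imp (idx ℓ) - u_req (idx ℓ)) :=
    Finset.sum_image (fun a _ b _ h => hinj h)
  -- telescoping
  set g : ℕ → EuclideanSpace ℝ (Fin 2) := fun ℓ =>
    if h : ℓ < L then u_imp (idx ⟨ℓ, h⟩) else u_req (idx ⟨L - 1, by omega⟩) with hg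
  have hterm : ∀ ℓ : Fin L, u_imp (idx ℓ) - u_req (idx ℓ) = g ℓ - g (ℓ + 1) := by
    intro ℓ
    have hℓ : (ℓ : ℕ) < L := ℓ.isLt
    rw [hg]
    simp only [hℓ, dif_pos]
    by_cases h' : (ℓ : ℕ) + 1 < L
    · rw [dif_pos h', hchain ℓ h']
    · rw [dif_neg h']
      have hℓe : ℓ = (⟨L - 1, by omega⟩ : Fin L) := by
        apply Fin.ext; simp; omega
      have : idx ℓ = idx ⟨L - 1, by omega⟩ := congrArg idx hℓe
      simp only [Fin.eta]
      rw [this]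
  have hsum3 : (∑ ℓ : Fin L, (u_imp (idx ℓ) - u_req (idx ℓ))) =
      ∑ ℓ ∈ Finset.range L, (g ℓ - g (ℓ + 1)) := by
    rw [Finset.sum_range fun i => g i - g (i + 1)]
    exact Finset.sum_congr rfl fun ℓ _ => hterm ℓ
  have htel : (∑ ℓ ∈ Finset.range L, (g ℓ - g (ℓ + 1))) = g 0 - g L :=
    Finset.sum_range_sub' g L
  have hg0 : g 0 = u_imp (idx ⟨0, by omega⟩) := by
    simp only [hg]; rw [dif_pos hL0]
  have hgL : g L = u_req (idx ⟨L - 1, by omega⟩) := by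
    simp only [hg]; rw [dif_neg (lt_irrefl L)]
  have hmain : (∑ i ∈ Finset.Icc 1 k, (u_imp i - u_req i)) =
      u_imp (idx ⟨0, by omega⟩) - u_req (idx ⟨L - 1, by omega⟩) := by
    rw [hsum1, hsum2, hsum3, htel, hg0, hgL]
  refine ⟨hmain, ?_⟩
  rw [hmain, ← dist_eq_norm]
  exact Metric.dist_le_diam_of_mem hbdd (himpI _ (hmem _)) (hreqI _ (hmem _))
end

section
/- Fix d ≥ 1. Let Γ ∈ ℝ^{d×d} be symmetric and positive definite, let γ ∈ ℝ^d, and let α > 0 be such that αλ ≤ 1 for every eigenvalue λ of Γ. Let (x_k)_{k≥1} and (y_k)_{k≥1} be sequences in ℝ^d with x_{k+1} = y_k − α(Γ y_k + γ) for all k ≥ 1, set ε_k := y_k − x_k for k ≥ 1, and suppose there is a constant C ≥ 0 with ‖∑_{i=1}^{k} ε_i‖ ≤ C for all k ≥ 1. Then the running average of the implemented setpoints converges to the minimizer of J(x) = xᵀΓx + γx + a: lim_{k→∞} (1/k) ∑_{i=1}^{k} y_i = −Γ^{-1} γ. -/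
open Finset in
/-- Contraction estimate for `v ↦ v - α • Γ v` for a positive definite `Γ`. -/
lemma stmt4_contraction {d : ℕ} {Γ : Matrix (Fin d) (Fin d) ℝ} (hpos : Γ.PosDef) {α ρ : ℝ}
    (hρ0 : 0 ≤ ρ) (hρ : ∀ i, |1 - α * hpos.1.eigenvalues i| ≤ ρ)
    (v : EuclideanSpace ℝ (Fin d)) :
    ‖v - α • Matrix.toEuclideanLin Γ v‖ ≤ ρ * ‖v‖ := by
  set b := hpos.1.eigenvectorBasis with hbdef
  set lam := hpos.1.eigenvalues with hlamdef
  have hb : ∀ i, Matrix.toEuclideanLin Γ (b i) = lam i • b i := by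
    intro i
    have h := hpos.1.mulVec_eigenvectorBasis i
    apply (WithLp.equiv 2 (Fin d → ℝ)).injective
    exact h
  have hsymL : LinearMap.IsSymmetric (Matrix.toEuclideanLin Γ) :=
    Matrix.isHermitian_iff_isSymmetric.mp hpos.1
  have hcoord : ∀ i, b.repr (v - α • Matrix.toEuclideanLin Γ v) i
      = (1 - α * lam i) * b.repr v i := by
    intro i
    have h1 : (inner ℝ (b i) (Matrix.toEuclideanLin Γ v) : ℝ) = lam i * inner ℝ (b i) v := by
      rw [← hsymL (b i) v, hb i, inner_smul_left]
      simp
    have h2 : b.repr ((Matrix.toEuclideanLin Γ) v) i = lam i * b.repr v i := by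
      simp only [OrthonormalBasis.repr_apply_apply]
      exact h1
    rw [map_sub, map_smul]
    simp only [PiLp.sub_apply, PiLp.smul_apply, h2, smul_eq_mul]
    ring
  have hnorm : ∀ w : EuclideanSpace ℝ (Fin d),
      ‖w‖ = Real.sqrt (∑ i, (b.repr w i) ^ 2) := by
    intro w
    rw [← b.repr.norm_map w, EuclideanSpace.norm_eq]
    congr 1
    apply Finset.sum_congr rfl
    intro i _
    rw [Real.norm_eq_abs, sq_abs]
  rw [hnorm (v - α • Matrix.toEuclideanLin Γ v), hnorm v]
  have hsum : ∑ i, (b.repr (v - α • Matrix.toEuclideanLin Γ v) i) ^ 2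
      ≤ ρ ^ 2 * ∑ i, (b.repr v i) ^ 2 := by
    rw [Finset.mul_sum]
    apply Finset.sum_le_sum
    intro i _
    rw [hcoord i, mul_pow]
    apply mul_le_mul_of_nonneg_right _ (sq_nonneg _)
    calc (1 - α * lam i) ^ 2 = |1 - α * lam i| ^ 2 := (sq_abs _).symm
      _ ≤ ρ ^ 2 := by
          apply pow_le_pow_left₀ (abs_nonneg _) (hρ i)
  calc Real.sqrt (∑ i, (b.repr (v - α • Matrix.toEuclideanLin Γ v) i) ^ 2)
      ≤ Real.sqrt (ρ ^ 2 * ∑ i, (b.repr v i) ^ 2) := Real.sqrt_le_sqrt hsum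
    _ = ρ * Real.sqrt (∑ i, (b.repr v i) ^ 2) := by
        rw [Real.sqrt_mul (sq_nonneg ρ), Real.sqrt_sq hρ0]

/-- For a symmetric positive definite `Γ`, step size `α > 0` with `αλ ≤ 1` for
every eigenvalue `λ` of `Γ`, and sequences satisfying the gradient-descent recursion
`x_{k+1} = y_k − α(Γ y_k + γ)` with total implementation error `∑_{i=1}^k (y_i − x_i)`
bounded in norm by `C`, the running average of `y` converges to the minimizer `−Γ⁻¹γ`. -/
theorem stmt4 (d : ℕ) (hd : 1 ≤ d) (Γ : Matrix (Fin d) (Fin d) ℝ) (hsymm : Γ.IsSymm)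
    (hpos : Γ.PosDef) (γ : EuclideanSpace ℝ (Fin d)) (α : ℝ) (hα : 0 < α)
    (heig : ∀ lam ∈ spectrum ℝ Γ, α * lam ≤ 1)
    (x y : ℕ → EuclideanSpace ℝ (Fin d))
    (hx : ∀ k : ℕ, 1 ≤ k → x (k + 1) = y k - α • (Matrix.toEuclideanLin Γ (y k) + γ))
    (C : ℝ) (hC : 0 ≤ C)
    (hbdd : ∀ k : ℕ, 1 ≤ k → ‖∑ i ∈ Finset.Icc 1 k, (y i - x i)‖ ≤ C) :
    Filter.Tendsto (fun k : ℕ => (k : ℝ)⁻¹ • ∑ i ∈ Finset.Icc 1 k, y i)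
      Filter.atTop (nhds (-(Matrix.toEuclideanLin Γ⁻¹ γ))) := by
  haveI : NeZero d := ⟨by omega⟩
  set A : EuclideanSpace ℝ (Fin d) →ₗ[ℝ] EuclideanSpace ℝ (Fin d) := Matrix.toEuclideanLin Γ
    with hAdef
  set lam := hpos.1.eigenvalues with hlamdef
  -- eigenvalue facts
  have hlam_pos : ∀ i, 0 < lam i := fun i => hpos.eigenvalues_pos i
  have hlam_le : ∀ i, α * lam i ≤ 1 := fun i =>
    heig _ (hpos.1.eigenvalues_mem_spectrum_real i)
  -- the contraction factor
  set ρ : ℝ := Finset.univ.sup' Finset.univ_nonempty (fun i => 1 - α * lam i) with hρdef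
  have hρ0 : 0 ≤ ρ := by
    obtain ⟨i⟩ := (inferInstance : Nonempty (Fin d))
    calc (0:ℝ) ≤ 1 - α * lam i := by linarith [hlam_le i]
      _ ≤ ρ := Finset.le_sup' (fun i => 1 - α * lam i) (Finset.mem_univ i)
  have hρ1 : ρ < 1 := by
    rw [hρdef, Finset.sup'_lt_iff]
    intro i _
    have := mul_pos hα (hlam_pos i)
    linarith
  have hρabs : ∀ i, |1 - α * lam i| ≤ ρ := by
    intro i
    rw [abs_of_nonneg (by linarith [hlam_le i])]
    exact Finset.le_sup' (fun i => 1 - α * lam i) (Finset.mem_univ i)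
  have hcontr : ∀ v : EuclideanSpace ℝ (Fin d), ‖v - α • A v‖ ≤ ρ * ‖v‖ :=
    fun v => stmt4_contraction hpos hρ0 hρabs v
  -- error sequence
  set ε : ℕ → EuclideanSpace ℝ (Fin d) := fun k => y k - x k with hεdef
  have hy : ∀ k : ℕ, 1 ≤ k → y (k + 1) = y k - α • (A (y k) + γ) + ε (k + 1) := by
    intro k hk
    show y (k+1) = y k - α • (A (y k) + γ) + (y (k+1) - x (k+1))
    rw [hx k hk]
    abel
  have hε2 : ∀ k : ℕ, 1 ≤ k → ‖ε (k + 1)‖ ≤ 2 * C := by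
    intro k hk
    have hsplit : ∑ i ∈ Finset.Icc 1 (k+1), ε i = (∑ i ∈ Finset.Icc 1 k, ε i) + ε (k+1) :=
      Finset.sum_Icc_succ_top (by omega) ε
    have : ε (k+1) = (∑ i ∈ Finset.Icc 1 (k+1), ε i) - ∑ i ∈ Finset.Icc 1 k, ε i := by
      rw [hsplit]; abel
    rw [this]
    calc ‖(∑ i ∈ Finset.Icc 1 (k+1), ε i) - ∑ i ∈ Finset.Icc 1 k, ε i‖
        ≤ ‖∑ i ∈ Finset.Icc 1 (k+1), ε i‖ + ‖∑ i ∈ Finset.Icc 1 k, ε i‖ := norm_sub_le _ _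
      _ ≤ C + C := add_le_add (hbdd (k+1) (by omega)) (hbdd k hk)
      _ = 2 * C := by ring
  -- boundedness of y
  set D : ℝ := α * ‖γ‖ + 2 * C with hDdef
  have hD0 : 0 ≤ D := by positivity
  set M : ℝ := max ‖y 1‖ (D / (1 - ρ)) with hMdef
  have hM0 : 0 ≤ M := le_trans (norm_nonneg _) (le_max_left _ _)
  have hDM : ρ * M + D ≤ M := by
    have h1 : D / (1 - ρ) ≤ M := le_max_right _ _
    have h2 : D ≤ (1 - ρ) * M := by
      rw [div_le_iff₀ (by linarith)] at h1
      linarith [h1]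
    nlinarith
  have hybdd : ∀ n : ℕ, 1 ≤ n → ‖y n‖ ≤ M := by
    intro n hn
    induction n, hn using Nat.le_induction with
    | base => exact le_max_left _ _
    | succ n hn ih =>
      have heq : y (n + 1) = (y n - α • A (y n)) + (ε (n+1) - α • γ) := by
        rw [hy n hn, smul_add]; abel
      calc ‖y (n+1)‖ = ‖(y n - α • A (y n)) + (ε (n+1) - α • γ)‖ := by rw [heq]
        _ ≤ ‖y n - α • A (y n)‖ + (‖ε (n+1)‖ + ‖α • γ‖) :=
            le_trans (norm_add_le _ _) (by gcongr; exact norm_sub_le _ _)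
        _ ≤ ρ * ‖y n‖ + (2 * C + α * ‖γ‖) := by
            gcongr
            · exact hcontr _
            · exact hε2 n hn
            · rw [norm_smul, Real.norm_eq_abs, abs_of_pos hα]
        _ ≤ ρ * M + D := by
            have h := mul_le_mul_of_nonneg_left ih hρ0
            rw [hDdef]; linarith
        _ ≤ M := hDM
  -- telescoping identity
  have key : ∀ n : ℕ, 1 ≤ n → y (n+1) = y 1 - α • A (∑ i ∈ Finset.Icc 1 n, y i)
      - (n : ℝ) • (α • γ) + ∑ k ∈ Finset.Icc 1 n, ε (k+1) := by
    intro n hn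
    induction n, hn using Nat.le_induction with
    | base =>
      rw [hy 1 (le_refl 1)]
      simp only [Finset.Icc_self, Finset.sum_singleton, Nat.cast_one, one_smul, smul_add]
      abel
    | succ n hn ih =>
      rw [hy (n+1) (by omega),
        Finset.sum_Icc_succ_top (by omega : 1 ≤ n + 1) y,
        Finset.sum_Icc_succ_top (by omega : 1 ≤ n + 1) (fun k => ε (k+1)),
        map_add, ih]
      push_cast
      match_scalars <;> ring
  -- bound on the shifted error sums
  have hTbdd : ∀ n : ℕ, 1 ≤ n → ‖∑ k ∈ Finset.Icc 1 n, ε (k+1)‖ ≤ C + ‖ε 1‖ := by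
    intro n hn
    have hshift : ∀ m : ℕ, ε 1 + ∑ k ∈ Finset.Icc 1 m, ε (k+1) = ∑ k ∈ Finset.Icc 1 (m+1), ε k := by
      intro m
      induction m with
      | zero => simp
      | succ m ih =>
        rw [Finset.sum_Icc_succ_top (by omega : 1 ≤ m + 1) (fun k => ε (k+1)),
          Finset.sum_Icc_succ_top (by omega : 1 ≤ m + 2) ε, ← ih]
        abel
    have : ∑ k ∈ Finset.Icc 1 n, ε (k+1) = (∑ k ∈ Finset.Icc 1 (n+1), ε k) - ε 1 := by
      rw [← hshift n]; abel
    rw [this]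
    calc ‖(∑ k ∈ Finset.Icc 1 (n+1), ε k) - ε 1‖
        ≤ ‖∑ k ∈ Finset.Icc 1 (n+1), ε k‖ + ‖ε 1‖ := norm_sub_le _ _
      _ ≤ C + ‖ε 1‖ := by gcongr; exact hbdd (n+1) (by omega)
  -- the average
  set avg : ℕ → EuclideanSpace ℝ (Fin d) :=
    fun n => (n : ℝ)⁻¹ • ∑ i ∈ Finset.Icc 1 n, y i with havg
  have hAavg : ∀ n : ℕ, 1 ≤ n → A (avg n) + γ
      = (α * n)⁻¹ • (y 1 - y (n+1) + ∑ k ∈ Finset.Icc 1 n, ε (k+1)) := by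
    intro n hn
    have hn0 : (0:ℝ) < n := by exact_mod_cast hn
    have h1 : α • A (∑ i ∈ Finset.Icc 1 n, y i) = y 1 - y (n+1)
        - (n:ℝ) • (α • γ) + ∑ k ∈ Finset.Icc 1 n, ε (k+1) := by
      rw [key n hn]; abel
    have h2 : A (∑ i ∈ Finset.Icc 1 n, y i) = α⁻¹ • (y 1 - y (n+1)
        - (n:ℝ) • (α • γ) + ∑ k ∈ Finset.Icc 1 n, ε (k+1)) := by
      rw [← h1, smul_smul, inv_mul_cancel₀ hα.ne', one_smul]
    have hn' : (n:ℝ) ≠ 0 := hn0.ne'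
    rw [havg]
    simp only [map_smul, h2]
    match_scalars <;> field_simp <;> ring
  set K : ℝ := ‖y 1‖ + M + (C + ‖ε 1‖) with hKdef
  have h0 : Filter.Tendsto (fun n : ℕ => A (avg n) + γ) Filter.atTop (nhds 0) := by
    refine squeeze_zero_norm' (a := fun n : ℕ => (K * α⁻¹) * (n:ℝ)⁻¹) ?_ ?_
    · filter_upwards [Filter.eventually_ge_atTop 1] with n hn
      rw [hAavg n hn, norm_smul, Real.norm_eq_abs]
      have hn0 : (0:ℝ) < n := by exact_mod_cast hn
      have habs : |(α * (n:ℝ))⁻¹| = α⁻¹ * (n:ℝ)⁻¹ := by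
        rw [abs_of_nonneg (by positivity), mul_inv]
      rw [habs]
      have hb : ‖y 1 - y (n+1) + ∑ k ∈ Finset.Icc 1 n, ε (k+1)‖ ≤ K := by
        calc ‖y 1 - y (n+1) + ∑ k ∈ Finset.Icc 1 n, ε (k+1)‖
            ≤ ‖y 1 - y (n+1)‖ + ‖∑ k ∈ Finset.Icc 1 n, ε (k+1)‖ := norm_add_le _ _
          _ ≤ (‖y 1‖ + ‖y (n+1)‖) + (C + ‖ε 1‖) :=
              add_le_add (norm_sub_le _ _) (hTbdd n hn)
          _ ≤ K := by rw [hKdef]; gcongr; exact hybdd (n+1) (by omega)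
      calc α⁻¹ * (n:ℝ)⁻¹ * ‖y 1 - y (n+1) + ∑ k ∈ Finset.Icc 1 n, ε (k+1)‖
          ≤ α⁻¹ * (n:ℝ)⁻¹ * K := by gcongr
        _ = K * α⁻¹ * (n:ℝ)⁻¹ := by ring
    · simpa using tendsto_inv_atTop_nhds_zero_nat.const_mul (K * α⁻¹)
  have hA2 : Filter.Tendsto (fun n : ℕ => A (avg n)) Filter.atTop (nhds (-γ)) := by
    have := h0.sub_const γ
    simpa using this
  -- invert
  set B : EuclideanSpace ℝ (Fin d) →ₗ[ℝ] EuclideanSpace ℝ (Fin d) := Matrix.toEuclideanLin Γ⁻¹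
    with hBdef
  have hdet : IsUnit Γ.det := isUnit_iff_ne_zero.mpr (ne_of_gt hpos.det_pos)
  have hmul : Γ⁻¹ * Γ = 1 := Matrix.nonsing_inv_mul Γ hdet
  have hBA : ∀ v : EuclideanSpace ℝ (Fin d), B (A v) = v := by
    intro v
    apply (WithLp.equiv 2 (Fin d → ℝ)).injective
    simp [hBdef, hAdef, Matrix.toEuclideanLin_apply, Matrix.mulVec_mulVec, hmul]
  have hBcont : Continuous B := B.continuous_of_finiteDimensional
  have hfinal : Filter.Tendsto avg Filter.atTop (nhds (B (-γ))) := by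
    have : avg = fun n => B (A (avg n)) := funext fun n => (hBA _).symm
    rw [this]
    exact (hBcont.tendsto (-γ)).comp hA2
  have : B (-γ) = -(Matrix.toEuclideanLin Γ⁻¹ γ) := map_neg B γ
  rw [← this]
  exact hfinal
end

section
/- Fix d ≥ 1. Let Γ ∈ ℝ^{d×d} be symmetric and positive definite, let γ ∈ ℝ^d, and let α > 0 be such that αλ ≤ 1 for every eigenvalue λ of Γ; let r := ρ(I − αΓ) be the spectral radius of I − αΓ (so 0 ≤ r < 1). Let (x_k)_{k≥1} and (y_k)_{k≥1} be sequences in ℝ^d with x_{k+1} = y_k − α(Γ y_k + γ) for all k ≥ 1, set ε_k := y_k − x_k for k ≥ 1 and ε_0 := 0, and suppose there is a constant C ≥ 0 with ‖∑_{i=1}^{k} ε_i‖ ≤ C for all k ≥ 1. Then for every k ≥ 1, ‖(1/k) ∑_{i=1}^{k} y_i − (−Γ^{-1}γ)‖ ≤ ((1 − r^k)/(k(1 − r))) · (‖ψ‖ + ‖Γ^{-1}‖ ‖γ‖ r² + C), where ψ := x_1 + 2αγ − α²Γγ and ‖Γ^{-1}‖ is the induced ℓ2 (operator) norm of Γ^{-1}.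 -/
open Matrix in
lemma norm_toEuclideanLin_le_of_eigen {d : ℕ} {A : Matrix (Fin d) (Fin d) ℝ}
    (hA : A.IsHermitian) {c : ℝ} (hc : 0 ≤ c)
    (h : ∀ i, |hA.eigenvalues i| ≤ c) (v : EuclideanSpace ℝ (Fin d)) :
    ‖Matrix.toEuclideanLin A v‖ ≤ c * ‖v‖ := by
  set b := hA.eigenvectorBasis with hb
  have hsym := (Matrix.isHermitian_iff_isSymmetric.1 hA)
  have happ : ∀ i, Matrix.toEuclideanLin A (b i) = hA.eigenvalues i • b i := by
    intro i
    have h2 := hA.mulVec_eigenvectorBasis i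
    ext j
    have := congrFun h2 j
    simpa [Matrix.toEuclideanLin_apply] using this
  have key : ∀ w : EuclideanSpace ℝ (Fin d), ‖w‖ ^ 2 = ∑ i, (inner ℝ (b i) w : ℝ) ^ 2 := by
    intro w
    rw [← real_inner_self_eq_norm_sq, ← b.sum_inner_mul_inner w w]
    refine Finset.sum_congr rfl fun i _ => ?_
    rw [real_inner_comm w (b i)]; ring
  have hinner : ∀ i, (inner ℝ (b i) (Matrix.toEuclideanLin A v) : ℝ)
      = hA.eigenvalues i * inner ℝ (b i) v := by
    intro i
    rw [← hsym (b i) v, happ i, real_inner_smul_left]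
  have h1 : ‖Matrix.toEuclideanLin A v‖ ^ 2 ≤ (c * ‖v‖) ^ 2 := by
    rw [key]
    calc ∑ i, (inner ℝ (b i) (Matrix.toEuclideanLin A v) : ℝ) ^ 2
        ≤ ∑ i, c ^ 2 * (inner ℝ (b i) v : ℝ) ^ 2 := by
          refine Finset.sum_le_sum fun i _ => ?_
          rw [hinner i, mul_pow]
          have : hA.eigenvalues i ^ 2 ≤ c ^ 2 :=
            sq_le_sq' (neg_le_of_abs_le (h i)) (le_of_abs_le (h i))
          exact mul_le_mul_of_nonneg_right this (sq_nonneg _)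
      _ = (c * ‖v‖) ^ 2 := by rw [← Finset.mul_sum, ← key, mul_pow]
  exact (pow_le_pow_iff_left₀ (norm_nonneg _) (by positivity) two_ne_zero).1 h1

lemma stmt5_spec_facts {d : ℕ} (hd : 1 ≤ d) {Γ : Matrix (Fin d) (Fin d) ℝ}
    (hpos : Γ.PosDef) {α : ℝ} (hα : 0 < α)
    (heig : ∀ lam ∈ spectrum ℝ Γ, α * lam ≤ 1)
    {r : ℝ} (hr : r = (spectralRadius ℝ (1 - α • Γ)).toReal) :
    0 ≤ r ∧ r < 1 ∧
      ∀ v : EuclideanSpace ℝ (Fin d), ‖Matrix.toEuclideanLin (1 - α • Γ) v‖ ≤ r * ‖v‖ := by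
  have hn : Nonempty (Fin d) := ⟨⟨0, hd⟩⟩
  set M : Matrix (Fin d) (Fin d) ℝ := 1 - α • Γ with hM_def
  have hMh : M.IsHermitian := by
    simp only [Matrix.IsHermitian, hM_def, Matrix.conjTranspose_sub,
      Matrix.conjTranspose_smul, Matrix.conjTranspose_one, star_trivial, hpos.1.eq]
  -- spectrum of M
  have hspec01 : ∀ m ∈ spectrum ℝ M, 0 ≤ m ∧ m < 1 := by
    intro m hm
    have hlam : (1 - m) / α ∈ spectrum ℝ Γ := by
      rw [spectrum.mem_iff] at hm ⊢
      intro h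
      apply hm
      have hu1 : IsUnit ((α : ℝ) • (1 : Matrix (Fin d) (Fin d) ℝ)) := by
        rw [← Algebra.algebraMap_eq_smul_one]
        exact IsUnit.map (algebraMap ℝ (Matrix (Fin d) (Fin d) ℝ))
          (isUnit_iff_ne_zero.mpr hα.ne')
      have key : (algebraMap ℝ (Matrix (Fin d) (Fin d) ℝ)) m - M =
          -(α • ((algebraMap ℝ (Matrix (Fin d) (Fin d) ℝ)) ((1 - m) / α) - Γ)) := by
        rw [hM_def, Algebra.algebraMap_eq_smul_one, Algebra.algebraMap_eq_smul_one,
          smul_sub, smul_smul, mul_div_cancel₀ _ hα.ne']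
        module
      rw [key]
      have h5 : α • ((algebraMap ℝ (Matrix (Fin d) (Fin d) ℝ)) ((1 - m) / α) - Γ) =
          ((α : ℝ) • (1 : Matrix (Fin d) (Fin d) ℝ)) *
            ((algebraMap ℝ (Matrix (Fin d) (Fin d) ℝ)) ((1 - m) / α) - Γ) := by
        rw [smul_mul_assoc, one_mul]
      rw [h5]
      exact (hu1.mul h).neg
    have hlam_pos : 0 < (1 - m) / α := by
      rw [Matrix.IsHermitian.spectrum_real_eq_range_eigenvalues hpos.1] at hlam
      obtain ⟨i, hi⟩ := hlam
      rw [← hi]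
      exact hpos.eigenvalues_pos i
    have h3 := heig _ hlam
    rw [mul_div_cancel₀ _ hα.ne'] at h3
    have h6 : 0 < 1 - m := by
      have := mul_pos hα hlam_pos
      rwa [mul_div_cancel₀ _ hα.ne'] at this
    constructor <;> linarith
  have hμ : ∀ i, 0 ≤ hMh.eigenvalues i ∧ hMh.eigenvalues i < 1 :=
    fun i => hspec01 _ (hMh.eigenvalues_mem_spectrum_real i)
  obtain ⟨i₀, hi₀⟩ := Finite.exists_max hMh.eigenvalues
  have hrmu : r = hMh.eigenvalues i₀ := by
    rw [hr]
    have hsup : spectralRadius ℝ M = (‖hMh.eigenvalues i₀‖₊ : ENNReal) := by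
      apply le_antisymm
      · apply iSup₂_le
        intro m hm
        rw [Matrix.IsHermitian.spectrum_real_eq_range_eigenvalues hMh] at hm
        obtain ⟨i, rfl⟩ := hm
        rw [ENNReal.coe_le_coe, ← NNReal.coe_le_coe, coe_nnnorm, coe_nnnorm,
          Real.norm_eq_abs, Real.norm_eq_abs, abs_of_nonneg (hμ i).1,
          abs_of_nonneg (hμ i₀).1]
        exact hi₀ i
      · exact le_iSup₂_of_le (hMh.eigenvalues i₀)
          (hMh.eigenvalues_mem_spectrum_real i₀) le_rfl
    rw [hsup, ENNReal.coe_toReal, coe_nnnorm, Real.norm_eq_abs, abs_of_nonneg (hμ i₀).1]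
  have hr0 : 0 ≤ r := hrmu ▸ (hμ i₀).1
  have hr1 : r < 1 := hrmu ▸ (hμ i₀).2
  have habs : ∀ i, |hMh.eigenvalues i| ≤ r := fun i => by
    rw [abs_of_nonneg (hμ i).1, hrmu]; exact hi₀ i
  have hT : ∀ v, ‖Matrix.toEuclideanLin M v‖ ≤ r * ‖v‖ :=
    norm_toEuclideanLin_le_of_eigen hMh hr0 habs
  exact ⟨hr0, hr1, hT⟩

set_option maxHeartbeats 1000000 in
/-- Quantitative version of the convergence result: under the hypotheses of
Statement 4, with `r = ρ(I − αΓ)` the spectral radius of `I − αΓ` and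
`ψ = x_1 + 2αγ − α²Γγ`, for every `k ≥ 1`,
`‖(1/k) ∑_{i=1}^k y_i − (−Γ⁻¹γ)‖ ≤ ((1 − r^k)/(k(1 − r))) (‖ψ‖ + ‖Γ⁻¹‖‖γ‖r² + C)`. -/
theorem stmt5 (d : ℕ) (hd : 1 ≤ d) (Γ : Matrix (Fin d) (Fin d) ℝ) (hsymm : Γ.IsSymm)
    (hpos : Γ.PosDef) (γ : EuclideanSpace ℝ (Fin d)) (α : ℝ) (hα : 0 < α)
    (heig : ∀ lam ∈ spectrum ℝ Γ, α * lam ≤ 1)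
    (r : ℝ) (hr : r = (spectralRadius ℝ (1 - α • Γ)).toReal)
    (x y : ℕ → EuclideanSpace ℝ (Fin d))
    (hx : ∀ k : ℕ, 1 ≤ k → x (k + 1) = y k - α • (Matrix.toEuclideanLin Γ (y k) + γ))
    (C : ℝ) (hC : 0 ≤ C)
    (hbdd : ∀ k : ℕ, 1 ≤ k → ‖∑ i ∈ Finset.Icc 1 k, (y i - x i)‖ ≤ C)
    (ψ : EuclideanSpace ℝ (Fin d))
    (hψ : ψ = x 1 + (2 * α) • γ - (α ^ 2) • Matrix.toEuclideanLin Γ γ) :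
    ∀ k : ℕ, 1 ≤ k →
      ‖(k : ℝ)⁻¹ • (∑ i ∈ Finset.Icc 1 k, y i) - (-(Matrix.toEuclideanLin Γ⁻¹ γ))‖ ≤
        ((1 - r ^ k) / ((k : ℝ) * (1 - r))) *
          (‖ψ‖ + ‖Matrix.toEuclideanCLM (𝕜 := ℝ) Γ⁻¹‖ * ‖γ‖ * r ^ 2 + C) := by
  obtain ⟨hr0, hr1, hT⟩ := stmt5_spec_facts hd hpos hα heig hr
  set M : Matrix (Fin d) (Fin d) ℝ := 1 - α • Γ with hM_def
  -- matrix inverse facts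
  have hdet : IsUnit Γ.det := isUnit_iff_ne_zero.mpr (ne_of_gt hpos.det_pos)
  have hinv1 : Γ⁻¹ * Γ = 1 := Matrix.nonsing_inv_mul Γ hdet
  have hinv2 : Γ * Γ⁻¹ = 1 := Matrix.mul_nonsing_inv Γ hdet
  have hlin_mul : ∀ (A B : Matrix (Fin d) (Fin d) ℝ) (v : EuclideanSpace ℝ (Fin d)),
      Matrix.toEuclideanLin (A * B) v = Matrix.toEuclideanLin A (Matrix.toEuclideanLin B v) := by
    intro A B v
    simp [Matrix.toEuclideanLin_apply, Matrix.mulVec_mulVec]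
  have hlin_one : ∀ v : EuclideanSpace ℝ (Fin d),
      Matrix.toEuclideanLin (1 : Matrix (Fin d) (Fin d) ℝ) v = v := by
    intro v
    simp [Matrix.toEuclideanLin_apply]
  set xs : EuclideanSpace ℝ (Fin d) := -(Matrix.toEuclideanLin Γ⁻¹ γ) with hxs
  have hLv : ∀ v : EuclideanSpace ℝ (Fin d),
      Matrix.toEuclideanLin M v = v - α • Matrix.toEuclideanLin Γ v := by
    intro v
    rw [hM_def, map_sub, map_smul, LinearMap.sub_apply, LinearMap.smul_apply, hlin_one]
  have hrec : ∀ k : ℕ, 1 ≤ k → x (k + 1) = Matrix.toEuclideanLin M (y k) - α • γ := by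
    intro k hk
    rw [hx k hk, hLv, smul_add]
    abel
  have hGxs : Matrix.toEuclideanLin Γ xs = -γ := by
    rw [hxs, map_neg, ← hlin_mul, hinv2, hlin_one]
  have hLxs : Matrix.toEuclideanLin M xs = xs + α • γ := by
    rw [hLv, hGxs, smul_neg, sub_neg_eq_add]
  -- bound on x 1 - xs
  have hmat : Γ⁻¹ * (M * M) = Γ⁻¹ - (2 * α) • 1 + (α ^ 2) • Γ := by
    have hMM : M * M = 1 - (2 * α) • Γ + (α ^ 2) • (Γ * Γ) := by
      rw [hM_def]
      simp only [sub_mul, mul_sub, one_mul, mul_one, smul_mul_assoc, mul_smul_comm]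
      module
    rw [hMM, mul_add, mul_sub, mul_one, mul_smul_comm, mul_smul_comm,
      ← mul_assoc, hinv1, one_mul]
  have hkey : x 1 - xs = ψ + Matrix.toEuclideanLin Γ⁻¹
      (Matrix.toEuclideanLin M (Matrix.toEuclideanLin M γ)) := by
    rw [← hlin_mul, ← hlin_mul, mul_assoc, hmat, hψ, hxs, map_add, map_sub, map_smul, map_smul,
      LinearMap.add_apply, LinearMap.sub_apply, LinearMap.smul_apply,
      LinearMap.smul_apply, hlin_one]
    abel
  have hCLM : ∀ w : EuclideanSpace ℝ (Fin d), ‖Matrix.toEuclideanLin Γ⁻¹ w‖ ≤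
      ‖Matrix.toEuclideanCLM (𝕜 := ℝ) Γ⁻¹‖ * ‖w‖ := by
    intro w
    have hb : Matrix.toEuclideanLin Γ⁻¹ w = Matrix.toEuclideanCLM (𝕜 := ℝ) Γ⁻¹ w := by
      rw [← Matrix.coe_toEuclideanCLM_eq_toEuclideanLin]
      rfl
    rw [hb]
    exact (Matrix.toEuclideanCLM (𝕜 := ℝ) Γ⁻¹).le_opNorm w
  have hx1 : ‖x 1 - xs‖ ≤ ‖ψ‖ + ‖Matrix.toEuclideanCLM (𝕜 := ℝ) Γ⁻¹‖ * ‖γ‖ * r ^ 2 := by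
    rw [hkey]
    refine (norm_add_le _ _).trans (add_le_add_right ?_ _)
    refine (hCLM _).trans ?_
    have h7 : ‖Matrix.toEuclideanLin M (Matrix.toEuclideanLin M γ)‖ ≤ r ^ 2 * ‖γ‖ := by
      refine (hT _).trans ?_
      have := hT γ
      nlinarith [norm_nonneg (Matrix.toEuclideanLin M γ), norm_nonneg γ]
    calc ‖Matrix.toEuclideanCLM (𝕜 := ℝ) Γ⁻¹‖ * ‖Matrix.toEuclideanLin M (Matrix.toEuclideanLin M γ)‖
        ≤ ‖Matrix.toEuclideanCLM (𝕜 := ℝ) Γ⁻¹‖ * (r ^ 2 * ‖γ‖) :=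
          mul_le_mul_of_nonneg_left h7 (norm_nonneg _)
      _ = ‖Matrix.toEuclideanCLM (𝕜 := ℝ) Γ⁻¹‖ * ‖γ‖ * r ^ 2 := by ring
  -- the averaged recursion
  obtain ⟨S, hSdef⟩ : ∃ S : ℕ → EuclideanSpace ℝ (Fin d),
      ∀ k, S k = (∑ i ∈ Finset.Icc 1 k, y i) - (k : ℝ) • xs := ⟨_, fun k => rfl⟩
  have hS0 : S 0 = 0 := by
    rw [hSdef 0]
    simp
  have hshift : ∀ k : ℕ, ∑ i ∈ Finset.Icc 1 k, x (i + 1) = ∑ i ∈ Finset.Icc 2 (k + 1), x i := by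
    intro k
    rw [← Finset.map_add_right_Icc 1 k 1, Finset.sum_map]
    rfl
  have hins : ∀ k : ℕ, ∑ i ∈ Finset.Icc 1 (k + 1), x i = x 1 + ∑ i ∈ Finset.Icc 2 (k + 1), x i := by
    intro k
    have he : Finset.Icc 1 (k + 1) = insert 1 (Finset.Icc 2 (k + 1)) := by
      ext i
      simp only [Finset.mem_Icc, Finset.mem_insert]
      omega
    rw [he, Finset.sum_insert (by simp)]
  have hSrec : ∀ k : ℕ, S (k + 1) = (x 1 - xs) + Matrix.toEuclideanLin M (S k)
      + ∑ i ∈ Finset.Icc 1 (k + 1), (y i - x i) := by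
    intro k
    rcases Nat.eq_zero_or_pos k with rfl | hk
    · rw [hS0, map_zero, hSdef 1]
      simp only [Finset.Icc_self, Finset.sum_singleton, Nat.cast_one, one_smul]
      abel
    · have hLy : ∀ i ∈ Finset.Icc 1 k, Matrix.toEuclideanLin M (y i) = x (i + 1) + α • γ := by
        intro i hi
        rw [hrec i (Finset.mem_Icc.mp hi).1]
        abel
      have hLS : Matrix.toEuclideanLin M (S k)
          = (∑ i ∈ Finset.Icc 2 (k + 1), x i) - (k : ℝ) • xs := by
        rw [hSdef k]
        rw [map_sub, map_smul, map_sum, Finset.sum_congr rfl hLy, Finset.sum_add_distrib,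
          Finset.sum_const, Nat.card_Icc, hLxs, hshift, smul_add]
        have hcast : (k + 1 - 1) • (α • γ) = (k : ℝ) • (α • γ) := by
          rw [Nat.add_sub_cancel, ← Nat.cast_smul_eq_nsmul ℝ k (α • γ)]
        rw [hcast]
        abel
      rw [hSdef (k + 1), hLS, Finset.sum_sub_distrib, hins k]
      push_cast
      rw [add_smul, one_smul]
      abel
  -- inductive bound
  have hbound : ∀ k : ℕ, ‖S k‖ ≤ (∑ t ∈ Finset.range k, r ^ t) *
      (‖ψ‖ + ‖Matrix.toEuclideanCLM (𝕜 := ℝ) Γ⁻¹‖ * ‖γ‖ * r ^ 2 + C) := by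
    intro k
    induction k with
    | zero =>
        rw [hS0, norm_zero, Finset.range_zero, Finset.sum_empty, zero_mul]
    | succ k ih =>
      rw [hSrec k]
      have h1 : ‖(x 1 - xs) + Matrix.toEuclideanLin M (S k)
              + ∑ i ∈ Finset.Icc 1 (k + 1), (y i - x i)‖
          ≤ ‖x 1 - xs‖ + ‖Matrix.toEuclideanLin M (S k)‖
              + ‖∑ i ∈ Finset.Icc 1 (k + 1), (y i - x i)‖ := norm_add₃_le
      have h2 := hT (S k)
      have h3 := hbdd (k + 1) (Nat.le_add_left 1 k)
      have h4 : r * ‖S k‖ ≤ r * ((∑ t ∈ Finset.range k, r ^ t) *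
          (‖ψ‖ + ‖Matrix.toEuclideanCLM (𝕜 := ℝ) Γ⁻¹‖ * ‖γ‖ * r ^ 2 + C)) :=
        mul_le_mul_of_nonneg_left ih hr0
      have h5 : (∑ t ∈ Finset.range (k + 1), r ^ t) *
            (‖ψ‖ + ‖Matrix.toEuclideanCLM (𝕜 := ℝ) Γ⁻¹‖ * ‖γ‖ * r ^ 2 + C)
          = (‖ψ‖ + ‖Matrix.toEuclideanCLM (𝕜 := ℝ) Γ⁻¹‖ * ‖γ‖ * r ^ 2 + C)
            + r * ((∑ t ∈ Finset.range k, r ^ t) *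
              (‖ψ‖ + ‖Matrix.toEuclideanCLM (𝕜 := ℝ) Γ⁻¹‖ * ‖γ‖ * r ^ 2 + C)) := by
        rw [geom_sum_succ]; ring
      rw [h5]
      linarith
  -- conclusion
  intro k hk
  have hk0 : (0 : ℝ) < (k : ℝ) := by exact_mod_cast hk
  have hvec : (k : ℝ)⁻¹ • (∑ i ∈ Finset.Icc 1 k, y i) - (-(Matrix.toEuclideanLin Γ⁻¹ γ))
      = (k : ℝ)⁻¹ • S k := by
    rw [hSdef k, smul_sub, smul_smul, inv_mul_cancel₀ hk0.ne', one_smul, hxs]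
  rw [hvec, norm_smul, Real.norm_eq_abs, abs_of_nonneg (inv_nonneg.mpr hk0.le)]
  have hgeom : ∑ t ∈ Finset.range k, r ^ t = (1 - r ^ k) / (1 - r) := by
    rw [geom_sum_eq (ne_of_lt hr1)]
    rw [div_eq_div_iff (sub_ne_zero.mpr (ne_of_lt hr1)) (sub_ne_zero.mpr (ne_of_gt hr1))]
    ring
  have h1r : (1 : ℝ) - r ≠ 0 := sub_ne_zero.mpr (ne_of_gt hr1)
  have hfactor : (k : ℝ)⁻¹ * ((1 - r ^ k) / (1 - r)) = (1 - r ^ k) / ((k : ℝ) * (1 - r)) := by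
    field_simp
  calc (k : ℝ)⁻¹ * ‖S k‖ ≤ (k : ℝ)⁻¹ * ((∑ t ∈ Finset.range k, r ^ t) *
        (‖ψ‖ + ‖Matrix.toEuclideanCLM (𝕜 := ℝ) Γ⁻¹‖ * ‖γ‖ * r ^ 2 + C)) :=
        mul_le_mul_of_nonneg_left (hbound k) (inv_nonneg.mpr hk0.le)
    _ = ((1 - r ^ k) / ((k : ℝ) * (1 - r))) *
        (‖ψ‖ + ‖Matrix.toEuclideanCLM (𝕜 := ℝ) Γ⁻¹‖ * ‖γ‖ * r ^ 2 + C) := by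
        rw [hgeom, ← mul_assoc, hfactor]
end

section
/- Let n ≥ 1 and let 𝕊 = {S_1, …, S_n} be a collection of finite nonempty subsets of ℝ with maximum stepsize Δ_𝕊. Let (i_k)_{k≥1} be any sequence with i_k ∈ {1, …, n}, and let (P_req_k)_{k≥1} be any sequence with P_req_k ∈ [min S_{i_k}, max S_{i_k}] for every k. Define e_0 := 0 and recursively P_imp_k := proj_{S_{i_k}}(P_req_k − e_{k−1}) and e_k := e_{k−1} + P_imp_k − P_req_k, where proj_{S}(x) is any element of S at minimal distance from x. Then |e_k| ≤ Δ_𝕊/2 for all k ≥ 1. -/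
/-- The maximum stepsize of a finite set `S ⊂ ℝ`: the largest gap between consecutive
elements (`0` if `S` is a singleton, since the set of gaps is then empty and `sSup ∅ = 0`). -/
noncomputable def maxStep (S : Finset ℝ) : ℝ :=
  sSup {d : ℝ | ∃ a ∈ S, ∃ b ∈ S, a < b ∧ (∀ c ∈ S, c ≤ a ∨ b ≤ c) ∧ d = b - a}

/-- The maximum stepsize of a finite collection `𝕊 = {S_1, …, S_n}`. -/
noncomputable def maxStepColl {n : ℕ} (S : Fin n → Finset ℝ) : ℝ :=
  sSup (Set.range fun i => maxStep (S i))

lemma gapSet_bddAbove (S : Finset ℝ) (hS : S.Nonempty) :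
    BddAbove {d : ℝ | ∃ a ∈ S, ∃ b ∈ S, a < b ∧ (∀ c ∈ S, c ≤ a ∨ b ≤ c) ∧ d = b - a} := by
  refine ⟨S.max' hS - S.min' hS, ?_⟩
  rintro d ⟨a, ha, b, hb, hab, _, rfl⟩
  have h1 := S.le_max' b hb
  have h2 := S.min'_le a ha
  linarith

lemma myMaxStep_nonneg (S : Finset ℝ) : 0 ≤ maxStep S := by
  unfold maxStep
  apply Real.sSup_nonneg
  rintro d ⟨a, _, b, _, hab, _, rfl⟩; linarith

lemma key_near (S : Finset ℝ) (hS : S.Nonempty) (D t : ℝ) (hD : maxStep S ≤ D)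
    (h1 : S.min' hS - D / 2 ≤ t) (h2 : t ≤ S.max' hS + D / 2) :
    ∃ s ∈ S, |s - t| ≤ D / 2 := by
  have hD0 : 0 ≤ D := le_trans (myMaxStep_nonneg S) hD
  rcases le_or_gt t (S.min' hS) with h | h
  · exact ⟨S.min' hS, S.min'_mem hS, by rw [abs_of_nonneg (by linarith)]; linarith⟩
  rcases le_or_gt (S.max' hS) t with h' | h'
  · exact ⟨S.max' hS, S.max'_mem hS, by rw [abs_of_nonpos (by linarith)]; linarith⟩
  set A := S.filter (· ≤ t) with hAdef
  set B := S.filter (t ≤ ·) with hBdef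
  have hA : A.Nonempty := ⟨S.min' hS, Finset.mem_filter.2 ⟨S.min'_mem hS, h.le⟩⟩
  have hB : B.Nonempty := ⟨S.max' hS, Finset.mem_filter.2 ⟨S.max'_mem hS, h'.le⟩⟩
  set a := A.max' hA with hadef
  set b := B.min' hB with hbdef
  have haS : a ∈ S := (Finset.mem_filter.1 (A.max'_mem hA)).1
  have hbS : b ∈ S := (Finset.mem_filter.1 (B.min'_mem hB)).1
  have hat : a ≤ t := (Finset.mem_filter.1 (A.max'_mem hA)).2
  have htb : t ≤ b := (Finset.mem_filter.1 (B.min'_mem hB)).2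
  rcases lt_or_ge a b with hab | hab
  · have hgap : b - a ≤ maxStep S := by
      apply le_csSup (gapSet_bddAbove S hS)
      refine ⟨a, haS, b, hbS, hab, fun c hc => ?_, rfl⟩
      rcases le_or_gt c t with h'' | h''
      · exact Or.inl (A.le_max' c (Finset.mem_filter.2 ⟨hc, h''⟩))
      · exact Or.inr (B.min'_le c (Finset.mem_filter.2 ⟨hc, h''.le⟩))
    rcases le_or_gt (t - a) ((b - a) / 2) with hh | hh
    · exact ⟨a, haS, by rw [abs_of_nonpos (by linarith)]; linarith⟩
    · exact ⟨b, hbS, by rw [abs_of_nonneg (by linarith)]; linarith⟩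
  · exact ⟨a, haS, by rw [abs_of_nonpos (by linarith)]; linarith⟩


/-- Error diffusion over a finite collection of finite sets: if every request
`P_req_k` lies in `conv(S_{i_k}) = [min S_{i_k}, max S_{i_k}]` and the implemented setpoint
is `P_imp_k = proj_{S_{i_k}}(P_req_k − e_{k−1})` with `e_k = e_{k−1} + P_imp_k − P_req_k`,
`e_0 = 0`, then `|e_k| ≤ Δ_𝕊 / 2` for all `k ≥ 1`. -/
theorem stmt6 (n : ℕ) (hn : 1 ≤ n) (S : Fin n → Finset ℝ) (hS : ∀ i, (S i).Nonempty)
    (idx : ℕ → Fin n) (Preq Pimp e : ℕ → ℝ)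
    (hreq : ∀ k : ℕ, 1 ≤ k →
      Preq k ∈ Set.Icc ((S (idx k)).min' (hS _)) ((S (idx k)).max' (hS _)))
    (he0 : e 0 = 0)
    (hmem : ∀ k : ℕ, 1 ≤ k → Pimp k ∈ S (idx k))
    (hproj : ∀ k : ℕ, 1 ≤ k → ∀ s ∈ S (idx k),
      |Pimp k - (Preq k - e (k - 1))| ≤ |s - (Preq k - e (k - 1))|)
    (he : ∀ k : ℕ, 1 ≤ k → e k = e (k - 1) + Pimp k - Preq k) :
    ∀ k : ℕ, 1 ≤ k → |e k| ≤ maxStepColl S / 2 := by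
  have hbdd : BddAbove (Set.range fun i => maxStep (S i)) :=
    (Set.finite_range _).bddAbove
  have hcoll : ∀ i, maxStep (S i) ≤ maxStepColl S := fun i =>
    le_csSup hbdd ⟨i, rfl⟩
  have hD0 : 0 ≤ maxStepColl S :=
    le_trans (myMaxStep_nonneg (S (idx 0))) (hcoll (idx 0))
  have main : ∀ k : ℕ, |e k| ≤ maxStepColl S / 2 := by
    intro k
    induction k with
    | zero => rw [he0, abs_zero]; linarith
    | succ k ih =>
      have h1 : 1 ≤ k + 1 := Nat.le_add_left 1 k
      have hsub : k + 1 - 1 = k := rfl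
      obtain ⟨hlo, hhi⟩ := hreq (k + 1) h1
      have hek := abs_le.1 ih
      obtain ⟨s, hs, hsle⟩ := key_near (S (idx (k + 1))) (hS _) (maxStepColl S)
        (Preq (k + 1) - e k) (hcoll _) (by linarith [hek.1, hek.2])
        (by linarith [hek.1, hek.2])
      have hp := hproj (k + 1) h1 s hs
      rw [hsub] at hp
      have heq : e (k + 1) = Pimp (k + 1) - (Preq (k + 1) - e k) := by
        have := he (k + 1) h1
        rw [hsub] at this
        linarith
      rw [heq]
      exact le_trans hp hsle
  exact fun k _ => main k
end

section
/- Let n ≥ 1 and let 𝕊 = {S_1, …, S_n} be a collection of finite nonempty subsets of ℝ with maximum stepsize Δ_𝕊. Let (i_k)_{k≥1} be any sequence with i_k ∈ {1, …, n}, let P_req_k ∈ [min S_{i_k}, max S_{i_k}] for every k, define e_0 := 0, P_imp_k := proj_{S_{i_k}}(P_req_k − e_{k−1}) and e_k := e_{k−1} + P_imp_k − P_req_k, where proj_S(x) is any element of S at minimal distance from x. Then the instantaneous error satisfies |P_imp_k − P_req_k| ≤ Δ_𝕊 for every k ≥ 1. -/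
lemma maxStep_nonneg (S : Finset ℝ) (hS : S.Nonempty) : 0 ≤ maxStep S := by
  rcases Set.eq_empty_or_nonempty
      {d : ℝ | ∃ a ∈ S, ∃ b ∈ S, a < b ∧ (∀ c ∈ S, c ≤ a ∨ b ≤ c) ∧ d = b - a} with h | h
  · simp [maxStep, h, Real.sSup_empty]
  · obtain ⟨d, hd⟩ := h
    have hle := le_csSup (gapSet_bddAbove S hS) hd
    obtain ⟨a, _, b, _, hab, _, rfl⟩ := hd
    unfold maxStep
    linarith

lemma gap_le_maxStep (S : Finset ℝ) (hS : S.Nonempty) {a b : ℝ} (ha : a ∈ S) (hb : b ∈ S)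
    (hab : a < b) (hcons : ∀ c ∈ S, c ≤ a ∨ b ≤ c) : b - a ≤ maxStep S :=
  le_csSup (gapSet_bddAbove S hS) ⟨a, ha, b, hb, hab, hcons, rfl⟩

lemma maxStep_le_coll {n : ℕ} (S : Fin n → Finset ℝ) (i : Fin n) :
    maxStep (S i) ≤ maxStepColl S := by
  apply le_csSup ((Set.finite_range _).bddAbove)
  exact ⟨i, rfl⟩

/-- For `x` between min and max of `S`, some element of `S` is within `maxStep S / 2`. -/
lemma exists_near (S : Finset ℝ) (hS : S.Nonempty) {x : ℝ}
    (h1 : S.min' hS ≤ x) (h2 : x ≤ S.max' hS) :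
    ∃ s ∈ S, |s - x| ≤ maxStep S / 2 := by
  classical
  set A := S.filter (fun s => s ≤ x) with hA
  set B := S.filter (fun s => x ≤ s) with hB
  have hAne : A.Nonempty := ⟨S.min' hS, by simp [hA, S.min'_mem hS, h1]⟩
  have hBne : B.Nonempty := ⟨S.max' hS, by simp [hB, S.max'_mem hS, h2]⟩
  set a := A.max' hAne with ha
  set b := B.min' hBne with hb
  have haS : a ∈ S := (Finset.mem_filter.mp (A.max'_mem hAne)).1
  have hbS : b ∈ S := (Finset.mem_filter.mp (B.min'_mem hBne)).1
  have hax : a ≤ x := (Finset.mem_filter.mp (A.max'_mem hAne)).2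
  have hxb : x ≤ b := (Finset.mem_filter.mp (B.min'_mem hBne)).2
  rcases lt_or_ge a b with hab | hab
  · have hcons : ∀ c ∈ S, c ≤ a ∨ b ≤ c := by
      intro c hc
      rcases le_or_gt c x with h | h
      · exact Or.inl (A.le_max' c (Finset.mem_filter.mpr ⟨hc, h⟩))
      · exact Or.inr (B.min'_le c (Finset.mem_filter.mpr ⟨hc, h.le⟩))
    have hgap : b - a ≤ maxStep S := gap_le_maxStep S hS haS hbS hab hcons
    rcases le_or_gt (x - a) ((b - a) / 2) with h | h
    · exact ⟨a, haS, by rw [abs_sub_comm, abs_of_nonneg (by linarith)]; linarith⟩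
    · exact ⟨b, hbS, by rw [abs_of_nonneg (by linarith)]; linarith⟩
  · have hnn := maxStep_nonneg S hS
    have : a = x := le_antisymm hax (le_trans (le_trans hxb hab) le_rfl)
    exact ⟨a, haS, by rw [this]; simpa using by linarith⟩

/-- Under the error-diffusion rule of Statement 6, the instantaneous error
satisfies `|P_imp_k − P_req_k| ≤ Δ_𝕊` for every `k ≥ 1`. -/
theorem stmt7 (n : ℕ) (hn : 1 ≤ n) (S : Fin n → Finset ℝ) (hS : ∀ i, (S i).Nonempty)
    (idx : ℕ → Fin n) (Preq Pimp e : ℕ → ℝ)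
    (hreq : ∀ k : ℕ, 1 ≤ k →
      Preq k ∈ Set.Icc ((S (idx k)).min' (hS _)) ((S (idx k)).max' (hS _)))
    (he0 : e 0 = 0)
    (hmem : ∀ k : ℕ, 1 ≤ k → Pimp k ∈ S (idx k))
    (hproj : ∀ k : ℕ, 1 ≤ k → ∀ s ∈ S (idx k),
      |Pimp k - (Preq k - e (k - 1))| ≤ |s - (Preq k - e (k - 1))|)
    (he : ∀ k : ℕ, 1 ≤ k → e k = e (k - 1) + Pimp k - Preq k) :
    ∀ k : ℕ, 1 ≤ k → |Pimp k - Preq k| ≤ maxStepColl S := by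
  set Δ := maxStepColl S with hΔ
  have hΔnn : 0 ≤ Δ := by
    have i0 : Fin n := ⟨0, hn⟩
    exact le_trans (maxStep_nonneg (S i0) (hS i0)) (maxStep_le_coll S i0)
  -- main invariant : |e k| ≤ Δ / 2
  have key : ∀ k : ℕ, |e k| ≤ Δ / 2 := by
    intro k
    induction k with
    | zero => rw [he0]; simpa using by linarith
    | succ m ih =>
      have hk1 : 1 ≤ m + 1 := Nat.le_add_left 1 m
      have hsub : (m + 1) - 1 = m := rfl
      set x := Preq (m + 1) - e m with hx
      have hek : e (m + 1) = Pimp (m + 1) - x := by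
        have := he (m + 1) hk1
        rw [hsub] at this
        rw [this, hx]; ring
      have hproj' : ∀ s ∈ S (idx (m + 1)), |Pimp (m + 1) - x| ≤ |s - x| := by
        intro s hs
        have := hproj (m + 1) hk1 s hs
        rwa [hsub] at this
      obtain ⟨hmin, hmax⟩ := hreq (m + 1) hk1
      have habs := abs_le.mp ih
      set i := idx (m + 1)
      rcases lt_or_ge x ((S i).min' (hS i)) with hlt | hge
      · -- x below min : project to min, error ≤ |e m| ≤ Δ/2
        have h := hproj' ((S i).min' (hS i)) ((S i).min'_mem (hS i))
        have hbd : |(S i).min' (hS i) - x| ≤ Δ / 2 := by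
          rw [abs_of_nonneg (by linarith)]
          have : x ≥ (S i).min' (hS i) - Δ / 2 := by
            have : e m ≤ Δ / 2 := habs.2
            simp only [hx]; linarith
          linarith
        rw [hek]; exact le_trans h hbd
      rcases lt_or_ge ((S i).max' (hS i)) x with hlt2 | hle2
      · have h := hproj' ((S i).max' (hS i)) ((S i).max'_mem (hS i))
        have hbd : |(S i).max' (hS i) - x| ≤ Δ / 2 := by
          rw [abs_of_nonpos (by linarith), neg_sub]
          have : -(Δ / 2) ≤ e m := habs.1
          simp only [hx]; linarith
        rw [hek]; exact le_trans h hbd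
      · obtain ⟨s, hs, hsx⟩ := exists_near (S i) (hS i) hge hle2
        have h := hproj' s hs
        rw [hek]
        calc |Pimp (m + 1) - x| ≤ |s - x| := h
          _ ≤ maxStep (S i) / 2 := hsx
          _ ≤ Δ / 2 := by have := maxStep_le_coll S i; linarith
  intro k hk
  have hek := he k hk
  have h1 := key k
  have h2 := key (k - 1)
  have : Pimp k - Preq k = e k - e (k - 1) := by rw [hek]; ring
  rw [this]
  calc |e k - e (k - 1)| ≤ |e k| + |e (k - 1)| := abs_sub _ _
    _ ≤ Δ := by linarith
end

section
/- Let n ≥ 1 and let 𝕊 = {S_1, …, S_n} be a uniform collection of finite subsets of ℝ with common stepsize Δ_𝕊 > 0 (each S_i has at least two elements and all consecutive gaps in each S_i equal Δ_𝕊). Let (i_k)_{k≥1} be any sequence with i_k ∈ {1, …, n}, let P_req_k ∈ [min S_{i_k}, max S_{i_k}] for every k, define e_0 := 0, and let P_imp_k be a tie-breaking projection of P_req_k − e_{k−1} onto S_{i_k} toward P_req_k, i.e., P_imp_k ∈ S_{i_k}, |P_imp_k − (P_req_k − e_{k−1})| = min_{s∈S_{i_k}} |s − (P_req_k − e_{k−1})|,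 and |P_imp_k − P_req_k| ≤ |ρ − P_req_k| for every ρ ∈ S_{i_k} attaining this minimum; set e_k := e_{k−1} + P_imp_k − P_req_k. Then |e_k| ≤ Δ_𝕊/2 for all k ≥ 1, and the strict instantaneous bound |P_imp_k − P_req_k| < Δ_𝕊 holds for every k ≥ 1. -/
/-- A finite set `S ⊂ ℝ` is uniform with stepsize `Δ` if it has at least two elements and
every gap between consecutive elements equals `Δ`. -/
def IsUniform (S : Finset ℝ) (Δ : ℝ) : Prop :=
  2 ≤ S.card ∧ ∀ a ∈ S, ∀ b ∈ S, a < b → (∀ c ∈ S, c ≤ a ∨ b ≤ c) → b - a = Δ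

lemma succ_mem' {S : Finset ℝ} {Δ : ℝ} (hu : IsUniform S Δ) {a : ℝ} (ha : a ∈ S)
    {b0 : ℝ} (hb0 : b0 ∈ S) (hab : a < b0) : a + Δ ∈ S := by
  have hne : (S.filter (fun s => a < s)).Nonempty := ⟨b0, Finset.mem_filter.2 ⟨hb0, hab⟩⟩
  have hbmem := (S.filter (fun s => a < s)).min'_mem hne
  rw [Finset.mem_filter] at hbmem
  have hcons : ∀ c ∈ S, c ≤ a ∨ (S.filter (fun s => a < s)).min' hne ≤ c := by
    intro c hc
    by_cases h : a < c
    · exact Or.inr (Finset.min'_le _ _ (Finset.mem_filter.2 ⟨hc, h⟩))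
    · exact Or.inl (le_of_not_gt h)
  have hba := hu.2 a ha _ hbmem.1 hbmem.2 hcons
  have heq : (S.filter (fun s => a < s)).min' hne = a + Δ := by linarith
  rw [← heq]; exact hbmem.1

lemma pred_mem' {S : Finset ℝ} {Δ : ℝ} (hu : IsUniform S Δ) {a : ℝ} (ha : a ∈ S)
    {b0 : ℝ} (hb0 : b0 ∈ S) (hab : b0 < a) : a - Δ ∈ S := by
  have hne : (S.filter (fun s => s < a)).Nonempty := ⟨b0, Finset.mem_filter.2 ⟨hb0, hab⟩⟩
  have hbmem := (S.filter (fun s => s < a)).max'_mem hne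
  rw [Finset.mem_filter] at hbmem
  have hcons : ∀ c ∈ S, c ≤ (S.filter (fun s => s < a)).max' hne ∨ a ≤ c := by
    intro c hc
    by_cases h : c < a
    · have hcf : c ∈ S.filter (fun s => s < a) := Finset.mem_filter.2 ⟨hc, h⟩
      exact Or.inl (Finset.le_max' _ _ hcf)
    · exact Or.inr (le_of_not_gt h)
  have hba := hu.2 _ hbmem.1 a ha hbmem.2 hcons
  have heq : (S.filter (fun s => s < a)).max' hne = a - Δ := by linarith
  rw [← heq]; exact hbmem.1

lemma near_mem' {S : Finset ℝ} {Δ : ℝ} (hu : IsUniform S Δ) (hΔ : 0 < Δ) (hS : S.Nonempty)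
    {x : ℝ} (h1 : S.min' hS - Δ/2 ≤ x) (h2 : x ≤ S.max' hS + Δ/2) :
    ∃ p ∈ S, |p - x| ≤ Δ/2 := by
  rcases le_or_gt x (S.min' hS) with h | h
  · exact ⟨S.min' hS, S.min'_mem hS, by rw [abs_of_nonneg (by linarith)]; linarith⟩
  rcases le_or_gt (S.max' hS) x with h' | h'
  · exact ⟨S.max' hS, S.max'_mem hS, by rw [abs_of_nonpos (by linarith)]; linarith⟩
  have hne : (S.filter (fun s => s ≤ x)).Nonempty :=
    ⟨S.min' hS, Finset.mem_filter.2 ⟨S.min'_mem hS, h.le⟩⟩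
  set a := (S.filter (fun s => s ≤ x)).max' hne with hadef
  have hamem := (S.filter (fun s => s ≤ x)).max'_mem hne
  rw [Finset.mem_filter] at hamem
  rcases le_or_gt (x - a) (Δ/2) with hc | hc
  · exact ⟨a, hamem.1, by rw [abs_of_nonpos (by linarith [hamem.2])]; linarith⟩
  · have hax : a < x := by linarith
    have hb : a + Δ ∈ S := succ_mem' hu hamem.1 (S.max'_mem hS) (lt_of_lt_of_le hax h'.le)
    have hbx : x < a + Δ := by
      by_contra hle
      push_neg at hle
      have hbf : a + Δ ∈ S.filter (fun s => s ≤ x) := Finset.mem_filter.2 ⟨hb, hle⟩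
      have : a + Δ ≤ a := Finset.le_max' _ _ hbf
      linarith
    exact ⟨a + Δ, hb, by rw [abs_of_nonneg (by linarith)]; linarith⟩

/-- Error diffusion over a uniform collection with common stepsize `Δ_𝕊 > 0`,
with tie-breaking projection toward the request: then `|e_k| ≤ Δ_𝕊/2` and the strict
instantaneous bound `|P_imp_k − P_req_k| < Δ_𝕊` hold for all `k ≥ 1`. -/
theorem stmt8 (n : ℕ) (hn : 1 ≤ n) (S : Fin n → Finset ℝ) (hS : ∀ i, (S i).Nonempty)
    (Δ : ℝ) (hΔ : 0 < Δ) (hunif : ∀ i, IsUniform (S i) Δ)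
    (idx : ℕ → Fin n) (Preq Pimp e : ℕ → ℝ)
    (hreq : ∀ k : ℕ, 1 ≤ k →
      Preq k ∈ Set.Icc ((S (idx k)).min' (hS _)) ((S (idx k)).max' (hS _)))
    (he0 : e 0 = 0)
    (hmem : ∀ k : ℕ, 1 ≤ k → Pimp k ∈ S (idx k))
    (hproj : ∀ k : ℕ, 1 ≤ k → ∀ s ∈ S (idx k),
      |Pimp k - (Preq k - e (k - 1))| ≤ |s - (Preq k - e (k - 1))|)
    (htie : ∀ k : ℕ, 1 ≤ k → ∀ ρ ∈ S (idx k),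
      (∀ s ∈ S (idx k), |ρ - (Preq k - e (k - 1))| ≤ |s - (Preq k - e (k - 1))|) →
      |Pimp k - Preq k| ≤ |ρ - Preq k|)
    (he : ∀ k : ℕ, 1 ≤ k → e k = e (k - 1) + Pimp k - Preq k) :
    ∀ k : ℕ, 1 ≤ k → |e k| ≤ Δ / 2 ∧ |Pimp k - Preq k| < Δ := by
  have key : ∀ k : ℕ, |e k| ≤ Δ / 2 := by
    intro k
    induction k with
    | zero => rw [he0, abs_zero]; linarith
    | succ m ih =>
      have hk : 1 ≤ m + 1 := Nat.le_add_left 1 m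
      have hm : m + 1 - 1 = m := rfl
      have hr := hreq (m + 1) hk
      have hek : e (m + 1) = Pimp (m + 1) - (Preq (m + 1) - e m) := by
        have h := he (m + 1) hk; rw [hm] at h; linarith
      have hih := abs_le.1 ih
      obtain ⟨p, hp, hpd⟩ := near_mem' (hunif (idx (m + 1))) hΔ (hS (idx (m + 1)))
        (x := Preq (m + 1) - e m) (by linarith [hr.1, hih.2]) (by linarith [hr.2, hih.1])
      have hpr := hproj (m + 1) hk p hp
      rw [hm] at hpr
      rw [hek]
      exact le_trans hpr hpd
  intro k hk
  refine ⟨key k, ?_⟩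
  have hekk : e k = e (k - 1) + Pimp k - Preq k := he k hk
  have h1 := abs_le.1 (key k)
  have h2 := abs_le.1 (key (k - 1))
  by_contra hcon
  push_neg at hcon
  have hmin := (hreq k hk).1
  have hmax := (hreq k hk).2
  rcases abs_cases (Pimp k - Preq k) with ⟨habs, _⟩ | ⟨habs, _⟩
  · -- Pimp k - Preq k = Δ
    have hek : e k = Δ / 2 := by linarith [h1.2, h2.1]
    have hek1 : e (k - 1) = -(Δ / 2) := by linarith [h1.2, h2.1]
    have hPimp : Pimp k = Preq k + Δ := by linarith
    have hρ : Pimp k - Δ ∈ S (idx k) :=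
      pred_mem' (hunif (idx k)) (hmem k hk) (Finset.min'_mem _ (hS (idx k))) (by linarith)
    have hρmin : ∀ s ∈ S (idx k),
        |Pimp k - Δ - (Preq k - e (k - 1))| ≤ |s - (Preq k - e (k - 1))| := by
      intro s hs
      have h' := hproj k hk s hs
      have heq : |Pimp k - Δ - (Preq k - e (k - 1))| = |Pimp k - (Preq k - e (k - 1))| := by
        rw [hPimp, hek1, show Preq k + Δ - Δ - (Preq k - -(Δ/2)) = -(Δ/2) by ring,
            show Preq k + Δ - (Preq k - -(Δ/2)) = Δ/2 by ring, abs_neg]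
      rw [heq]; exact h'
    have htie' := htie k hk _ hρ hρmin
    have hz : |Pimp k - Δ - Preq k| = 0 := by rw [hPimp]; simp
    rw [hz] at htie'
    linarith [abs_nonneg (Pimp k - Preq k)]
  · -- Pimp k - Preq k = -Δ
    have hek : e k = -(Δ / 2) := by linarith [h1.1, h2.2]
    have hek1 : e (k - 1) = Δ / 2 := by linarith [h1.1, h2.2]
    have hPimp : Pimp k = Preq k - Δ := by linarith
    have hρ : Pimp k + Δ ∈ S (idx k) :=
      succ_mem' (hunif (idx k)) (hmem k hk) (Finset.max'_mem _ (hS (idx k))) (by linarith)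
    have hρmin : ∀ s ∈ S (idx k),
        |Pimp k + Δ - (Preq k - e (k - 1))| ≤ |s - (Preq k - e (k - 1))| := by
      intro s hs
      have h' := hproj k hk s hs
      have heq : |Pimp k + Δ - (Preq k - e (k - 1))| = |Pimp k - (Preq k - e (k - 1))| := by
        rw [hPimp, hek1, show Preq k - Δ + Δ - (Preq k - Δ/2) = Δ/2 by ring,
            show Preq k - Δ - (Preq k - Δ/2) = -(Δ/2) by ring, abs_neg]
      rw [heq]; exact h'
    have htie' := htie k hk _ hρ hρmin
    have hz : |Pimp k + Δ - Preq k| = 0 := by rw [hPimp]; simp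
    rw [hz] at htie'
    linarith [abs_nonneg (Pimp k - Preq k)]
end

section
/- Let S ⊂ ℝ be a finite set and let P_1, P_2 ∈ S with P_1 < P_2 be consecutive elements of S (i.e., S ∩ (P_1, P_2) = ∅), and write Δ := P_2 − P_1. Let 0 < ε < Δ and consider the constant request sequence P_req_k := P_1 + ε. Then for every sequence (P_imp_k)_{k≥1} with values in S for which there exists c ≥ 0 with |∑_{i=1}^{k} (P_imp_i − P_req_i)| ≤ c for all k ≥ 1 (i.e., any algorithm achieving bounded accumulated error), there exists an index k₀ with P_imp_{k₀} ≥ P_2, and hence |P_imp_{k₀} − P_req_{k₀}| ≥ Δ − ε. In particular, no algorithm with bounded accumulated error can guarantee an instantaneous error strictly smaller than Δ − ε for every ε > 0; the bound |P_imp_k − P_req_k| < Δ is best possible. -/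
/-- Optimality of the instantaneous bound. Let `P_1 < P_2` be consecutive
elements of a finite set `S ⊂ ℝ` with gap `Δ = P_2 − P_1`, let `0 < ε < Δ`, and consider
the constant request `P_req_k = P_1 + ε`. Any `S`-valued sequence of implemented setpoints
with bounded accumulated error must satisfy `P_imp_{k₀} ≥ P_2` for some `k₀ ≥ 1`, hence
`|P_imp_{k₀} − P_req_{k₀}| ≥ Δ − ε`. -/
theorem stmt9 (S : Finset ℝ) (P1 P2 : ℝ) (hP1 : P1 ∈ S) (hP2 : P2 ∈ S) (hlt : P1 < P2)
    (hconsec : ∀ s ∈ S, s ≤ P1 ∨ P2 ≤ s)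
    (ε : ℝ) (hε0 : 0 < ε) (hεΔ : ε < P2 - P1)
    (Pimp : ℕ → ℝ) (hmem : ∀ k : ℕ, 1 ≤ k → Pimp k ∈ S)
    (c : ℝ) (hc : 0 ≤ c)
    (hbdd : ∀ k : ℕ, 1 ≤ k → |∑ i ∈ Finset.Icc 1 k, (Pimp i - (P1 + ε))| ≤ c) :
    ∃ k₀ : ℕ, 1 ≤ k₀ ∧ P2 ≤ Pimp k₀ ∧ (P2 - P1) - ε ≤ |Pimp k₀ - (P1 + ε)| := by
  by_cases h : ∃ k : ℕ, 1 ≤ k ∧ P2 ≤ Pimp k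
  · obtain ⟨k, hk1, hk2⟩ := h
    refine ⟨k, hk1, hk2, ?_⟩
    have : P2 - P1 - ε ≤ Pimp k - (P1 + ε) := by linarith
    exact this.trans (le_abs_self _)
  · push_neg at h
    exfalso
    have hle : ∀ k : ℕ, 1 ≤ k → Pimp k ≤ P1 := by
      intro k hk
      rcases hconsec _ (hmem k hk) with h1 | h2
      · exact h1
      · exact absurd h2 (not_le.mpr (h k hk))
    obtain ⟨N, hN⟩ := exists_nat_gt (c / ε)
    set k := N + 1
    have hk1 : 1 ≤ k := Nat.le_add_left 1 N
    have hsum : ∑ i ∈ Finset.Icc 1 k, (Pimp i - (P1 + ε)) ≤ ∑ i ∈ Finset.Icc 1 k, (-ε) := by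
      apply Finset.sum_le_sum
      intro i hi
      have := hle i (Finset.mem_Icc.mp hi).1
      linarith
    rw [Finset.sum_const, Nat.card_Icc] at hsum
    have hcard : (k + 1 - 1 : ℕ) = k := by simp
    rw [hcard] at hsum
    have hbd := hbdd k hk1
    have habs : -(∑ i ∈ Finset.Icc 1 k, (Pimp i - (P1 + ε))) ≤ c :=
      (neg_le_abs _).trans hbd
    have hkc : c < (k : ℝ) * ε := by
      have : c / ε < (k : ℝ) := hN.trans_le (by exact_mod_cast Nat.le_succ N)
      calc c = (c / ε) * ε := by field_simp
        _ < (k : ℝ) * ε := by nlinarith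
    rw [nsmul_eq_mul] at hsum
    linarith
end

section
/- Let S ⊂ ℝ be a finite uniform set with stepsize Δ > 0 (at least two elements, all consecutive gaps equal to Δ). Let x ∈ S and let e ∈ ℝ with |e| ≤ Δ/2. Let p be a tie-breaking projection of x − e onto S toward x, i.e., p ∈ S, |p − (x − e)| = min_{s∈S} |s − (x − e)|, and |p − x| ≤ |ρ − x| for every ρ ∈ S attaining this minimum. Then p = x. (Consequently, in the error-diffusion scheme with a uniform collection and tie-breaking toward the request, whenever the requested setpoint is itself implementable it is implemented exactly, regardless of the current accumulated error.) -/
lemma uniform_gap (S : Finset ℝ) (Δ : ℝ) (hunif : IsUniform S Δ)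
    {a b : ℝ} (ha : a ∈ S) (hb : b ∈ S) (hab : a < b) : Δ ≤ b - a := by
  classical
  set T := S.filter (fun s => a < s) with hT
  have hbT : b ∈ T := by simp [hT, hb, hab]
  have hne : T.Nonempty := ⟨b, hbT⟩
  set c := T.min' hne with hc
  have hcT : c ∈ T := T.min'_mem hne
  have hcS : c ∈ S := (Finset.mem_filter.mp hcT).1
  have hac : a < c := (Finset.mem_filter.mp hcT).2
  have hgap : c - a = Δ := hunif.2 a ha c hcS hac (fun d hd => by
    rcases le_or_gt d a with h | h
    · exact Or.inl h
    · exact Or.inr (T.min'_le d (by simp [hT, hd, h])))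
  have hcb : c ≤ b := T.min'_le b hbT
  linarith

/-- For a uniform set `S` with stepsize `Δ > 0`, if `x ∈ S`, `|e| ≤ Δ/2`,
and `p` is a tie-breaking projection of `x − e` onto `S` toward `x`, then `p = x`:
an implementable request is implemented exactly, regardless of the accumulated error. -/
theorem stmt10 (S : Finset ℝ) (Δ : ℝ) (hΔ : 0 < Δ) (hunif : IsUniform S Δ)
    (x : ℝ) (hx : x ∈ S) (e : ℝ) (he : |e| ≤ Δ / 2)
    (p : ℝ) (hp : p ∈ S)
    (hmin : ∀ s ∈ S, |p - (x - e)| ≤ |s - (x - e)|)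
    (htie : ∀ ρ ∈ S, (∀ s ∈ S, |ρ - (x - e)| ≤ |s - (x - e)|) → |p - x| ≤ |ρ - x|) :
    p = x := by
  by_contra hne
  -- distinct elements differ by at least Δ
  have hdist : Δ ≤ |p - x| := by
    rcases lt_trichotomy p x with h | h | h
    · have := uniform_gap S Δ hunif hp hx h
      rw [abs_sub_comm, abs_of_pos (by linarith)]; linarith
    · exact absurd h hne
    · have := uniform_gap S Δ hunif hx hp h
      rw [abs_of_pos (by linarith)]; linarith
  have h1 : |p - (x - e)| ≤ |e| := by
    have := hmin x hx
    simpa using this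
  have h2 : |p - x| ≤ |p - (x - e)| + |e| := by
    calc |p - x| = |(p - (x - e)) + (-e)| := by ring_nf
    _ ≤ |p - (x - e)| + |(-e)| := abs_add_le _ _
    _ = |p - (x - e)| + |e| := by rw [abs_neg]
  have h3 : |e| = |p - (x - e)| := by linarith
  have hxmin : ∀ s ∈ S, |x - (x - e)| ≤ |s - (x - e)| := by
    intro s hs
    have : |x - (x - e)| = |e| := by ring_nf
    rw [this, h3]
    exact hmin s hs
  have := htie x hx hxmin
  simp only [sub_self, abs_zero] at this
  have : |p - x| ≤ 0 := this
  linarith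
end

section
/- Let D ⊆ ℝ² be a convex compact set and let (I_k)_{k≥0} be a sequence of nonempty closed convex sets such that each I_k is a projection-translation invariant subset of D. Let (u_req_k)_{k≥1} be a sequence of requests with u_req_k ∈ I_{k−1} for every k ≥ 1 (persistent-predictor advertisement A_k = I_{k−1}). Define e_0 := 0 and recursively u_imp_k := proj_{I_k}(u_req_k − e_{k−1}) and e_k := e_{k−1} + u_imp_k − u_req_k, where proj_{I_k} is the nearest-point projection onto I_k. Then ‖e_k‖ ≤ diam D for all k ≥ 1, where diam D := max{‖v − w‖ : v, w ∈ D}. Moreover, u_req_k − e_{k−1} ∈ D for all k ≥ 1. -/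
/-- Error diffusion for uncertain resources with the persistent-predictor
advertisement. If each nonempty closed convex set `I_k` is a projection-translation
invariant subset of the convex compact set `D ⊆ ℝ²`, requests satisfy `u_req_k ∈ I_{k−1}`,
and the agent implements `u_imp_k = proj_{I_k}(u_req_k − e_{k−1})` with
`e_k = e_{k−1} + u_imp_k − u_req_k`, `e_0 = 0`, then for every `k ≥ 1` we have
`‖e_k‖ ≤ diam D` and moreover `u_req_k − e_{k−1} ∈ D`. -/
theorem stmt12 (D : Set (EuclideanSpace ℝ (Fin 2))) (hDconv : Convex ℝ D)
    (hDcomp : IsCompact D)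
    (I : ℕ → Set (EuclideanSpace ℝ (Fin 2)))
    (hne : ∀ k, (I k).Nonempty) (hclosed : ∀ k, IsClosed (I k))
    (hconv : ∀ k, Convex ℝ (I k))
    (proj : ℕ → EuclideanSpace ℝ (Fin 2) → EuclideanSpace ℝ (Fin 2))
    (hprojmem : ∀ k v, proj k v ∈ I k)
    (hprojmin : ∀ k v, ∀ w ∈ I k, ‖v - proj k v‖ ≤ ‖v - w‖)
    (hsub : ∀ k, I k ⊆ D)
    (hPTI : ∀ k, ∀ v ∈ D, ∀ u ∈ I k, u + v - proj k v ∈ D)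
    (u_req u_imp e : ℕ → EuclideanSpace ℝ (Fin 2))
    (hreq : ∀ k : ℕ, 1 ≤ k → u_req k ∈ I (k - 1))
    (he0 : e 0 = 0)
    (himp : ∀ k : ℕ, 1 ≤ k → u_imp k = proj k (u_req k - e (k - 1)))
    (he : ∀ k : ℕ, 1 ≤ k → e k = e (k - 1) + u_imp k - u_req k) :
    ∀ k : ℕ, 1 ≤ k → ‖e k‖ ≤ Metric.diam D ∧ u_req k - e (k - 1) ∈ D := by
  have key : ∀ k : ℕ, u_req (k+1) - e k ∈ D := by
    intro k
    induction k with
    | zero => simpa [he0] using hsub 0 (hreq 1 le_rfl)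
    | succ n ih =>
      have h1 : e (n+1) = e n + u_imp (n+1) - u_req (n+1) := by
        simpa using he (n+1) (by omega)
      have h2 : u_imp (n+1) = proj (n+1) (u_req (n+1) - e n) := by
        simpa using himp (n+1) (by omega)
      have hmem : u_req (n+2) ∈ I (n+1) := by simpa using hreq (n+2) (by omega)
      have hD := hPTI (n+1) (u_req (n+1) - e n) ih (u_req (n+2)) hmem
      have heq : u_req (n+2) - e (n+1)
          = u_req (n+2) + (u_req (n+1) - e n) - proj (n+1) (u_req (n+1) - e n) := by
        rw [h1, h2]; abel
      rw [heq]; exact hD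
  intro k hk
  obtain ⟨n, rfl⟩ : ∃ n, k = n + 1 := ⟨k - 1, by omega⟩
  have hx : u_req (n+1) - e n ∈ D := key n
  refine ⟨?_, by simpa using hx⟩
  have h1 : e (n+1) = e n + u_imp (n+1) - u_req (n+1) := by
    simpa using he (n+1) (by omega)
  have h2 : u_imp (n+1) = proj (n+1) (u_req (n+1) - e n) := by
    simpa using himp (n+1) (by omega)
  have hmem : proj (n+1) (u_req (n+1) - e n) ∈ D := hsub _ (hprojmem _ _)
  have heq : e (n+1) = proj (n+1) (u_req (n+1) - e n) - (u_req (n+1) - e n) := by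
    rw [h1, h2]; abel
  rw [heq, ← dist_eq_norm]
  exact Metric.dist_le_diam_of_mem hDcomp.isBounded hmem hx
end

section
/- Let (I_k)_{k≥0} be a sequence of nonempty closed bounded intervals in ℝ whose union is bounded, and let D := conv(closure of ⋃_{k≥0} I_k), a compact interval. Let (P_req_k)_{k≥1} satisfy P_req_k ∈ I_{k−1} for every k ≥ 1 (persistent-predictor advertisement). Define e_0 := 0 and recursively P_imp_k := proj_{I_k}(P_req_k − e_{k−1}) and e_k := e_{k−1} + P_imp_k − P_req_k, where proj_{I_k} is the nearest-point projection onto the interval I_k. Then |e_k| ≤ diam D for all k ≥ 1, where diam D is the length of the interval D. -/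
/-- Error diffusion for an uncertain real-power-only resource whose
implementable sets are closed bounded intervals `I_k = [lo_k, hi_k]` with bounded union,
with persistent-predictor advertisement (`P_req_k ∈ I_{k−1}`) and projection
`proj_{I_k}(v) = max lo_k (min hi_k v)`: the accumulated error satisfies
`|e_k| ≤ diam D` for all `k ≥ 1`, where `D = conv(⋃_k I_k)`. -/
theorem stmt13 (lo hi : ℕ → ℝ) (hle : ∀ k, lo k ≤ hi k)
    (m M : ℝ) (hbddlo : ∀ k, m ≤ lo k) (hbddhi : ∀ k, hi k ≤ M)
    (Preq : ℕ → ℝ)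
    (hreq : ∀ k : ℕ, 1 ≤ k → Preq k ∈ Set.Icc (lo (k - 1)) (hi (k - 1)))
    (e Pimp : ℕ → ℝ) (he0 : e 0 = 0)
    (himp : ∀ k : ℕ, 1 ≤ k → Pimp k = max (lo k) (min (hi k) (Preq k - e (k - 1))))
    (he : ∀ k : ℕ, 1 ≤ k → e k = e (k - 1) + Pimp k - Preq k) :
    ∀ k : ℕ, 1 ≤ k →
      |e k| ≤ Metric.diam (convexHull ℝ (closure (⋃ j, Set.Icc (lo j) (hi j)))) := by
  set D := convexHull ℝ (closure (⋃ j, Set.Icc (lo j) (hi j))) with hD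
  have hDsub : D ⊆ Set.Icc m M := by
    apply convexHull_min _ (convex_Icc m M)
    apply closure_minimal _ isClosed_Icc
    exact Set.iUnion_subset fun j => Set.Icc_subset_Icc (hbddlo j) (hbddhi j)
  have hbdd : Bornology.IsBounded D := (Metric.isBounded_Icc m M).subset hDsub
  have hmem : ∀ j x, x ∈ Set.Icc (lo j) (hi j) → x ∈ D := fun j x hx =>
    subset_convexHull ℝ _ (subset_closure (Set.mem_iUnion.2 ⟨j, hx⟩))
  have hdiam : ∀ j j', hi j' - lo j ≤ Metric.diam D := by
    intro j j'
    have h1 := hmem j (lo j) ⟨le_refl _, hle j⟩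
    have h2 := hmem j' (hi j') ⟨hle j', le_refl _⟩
    calc hi j' - lo j ≤ |hi j' - lo j| := le_abs_self _
      _ = dist (hi j') (lo j) := (Real.dist_eq _ _).symm
      _ ≤ Metric.diam D := Metric.dist_le_diam_of_mem hbdd h2 h1
  -- Invariant: v_k := Preq k - e (k-1) lies between some lo j and some hi j'
  have inv : ∀ k : ℕ, 1 ≤ k →
      ∃ j j', lo j ≤ Preq k - e (k - 1) ∧ Preq k - e (k - 1) ≤ hi j' := by
    intro k hk
    induction k with
    | zero => omega
    | succ n ih =>
      rcases Nat.lt_or_ge n 1 with hn | hn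
      · -- n = 0
        interval_cases n
        simp only [Nat.add_sub_cancel, he0, sub_zero]
        obtain ⟨h1, h2⟩ := hreq 1 le_rfl
        exact ⟨0, 0, h1, h2⟩
      · obtain ⟨j, j', hj, hj'⟩ := ih hn
        have hen := he n hn
        have himpn := himp n hn
        have hreqn1 := hreq (n + 1) (by omega)
        simp only [Nat.add_sub_cancel] at hreqn1 ⊢
        set v := Preq n - e (n - 1) with hv
        have hrew : Preq (n + 1) - e n = Preq (n + 1) - Pimp n + v := by
          rw [hen]; ring
        rcases le_or_gt (lo n) v with hlov | hlov
        · rcases le_or_gt v (hi n) with hhiv | hhiv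
          · -- interior: Pimp n = v
            have : Pimp n = v := by rw [himpn, min_eq_right hhiv, max_eq_right hlov]
            refine ⟨n, n, ?_, ?_⟩ <;> rw [hrew, this] <;> simp [hreqn1.1, hreqn1.2]
          · -- v > hi n
            have : Pimp n = hi n := by
              rw [himpn, min_eq_left hhiv.le, max_eq_right (hle n)]
            refine ⟨n, j', ?_, ?_⟩ <;> rw [hrew, this]
            · have := hreqn1.1; linarith
            · have := hreqn1.2; linarith
        · -- v < lo n
          have : Pimp n = lo n := by
            rw [himpn]
            rcases le_or_gt (hi n) v with h | h
            · linarith [hle n]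
            · rw [min_eq_right h.le, max_eq_left hlov.le]
          refine ⟨j, n, ?_, ?_⟩ <;> rw [hrew, this]
          · have := hreqn1.1; linarith
          · have := hreqn1.2; linarith
  intro k hk
  obtain ⟨j, j', hj, hj'⟩ := inv k hk
  have hek := he k hk
  have himpk := himp k hk
  set v := Preq k - e (k - 1) with hv
  have hekv : e k = Pimp k - v := by rw [hek]; ring
  rcases le_or_gt (lo k) v with hlov | hlov
  · rcases le_or_gt v (hi k) with hhiv | hhiv
    · have : Pimp k = v := by rw [himpk, min_eq_right hhiv, max_eq_right hlov]
      rw [hekv, this, sub_self, abs_zero]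
      exact Metric.diam_nonneg
    · have hp : Pimp k = hi k := by
        rw [himpk, min_eq_left hhiv.le, max_eq_right (hle k)]
      rw [hekv, hp, abs_sub_comm, abs_of_nonneg (by linarith)]
      have := hdiam k j'
      linarith [hbddlo k, hle k]
  · have hp : Pimp k = lo k := by
      rw [himpk]
      rcases le_or_gt (hi k) v with h | h
      · linarith [hle k]
      · rw [min_eq_right h.le, max_eq_left hlov.le]
    rw [hekv, hp, abs_of_nonneg (by linarith)]
    have := hdiam j k
    linarith [hle k]
end

section
/- Let P_max ≥ 0 and 0 ≤ φ < π/2, and for x ∈ [0, P_max] define the triangle T(x) := {(P, Q) ∈ ℝ² : 0 ≤ P ≤ x and |Q| ≤ P·tan φ}. Then for every x ∈ [0, P_max], T(x) is a projection-translation invariant subset of D := T(P_max): for every v ∈ T(P_max) and every u ∈ T(x), u + v − proj_{T(x)}(v) ∈ T(P_max), where proj_{T(x)} is the (unique) nearest-point projection onto the closed convex set T(x). -/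
lemma stmt14_aux (A B X M a b : ℝ)
    (key : (A - a) ^ 2 + (B - b) ^ 2 ≤ (A - X) ^ 2 + (B - M) ^ 2)
    (h1 : (A - X) * (a - X) ≤ 0) (h2 : (B - M) * (b - M) ≤ 0) :
    a = X ∧ b = M := by
  have hsq : (X - a) ^ 2 + (M - b) ^ 2 ≤ 0 := by nlinarith
  constructor <;> nlinarith [sq_nonneg (X - a), sq_nonneg (M - b)]

/-- For `P_max ≥ 0` and `0 ≤ φ < π/2`, every triangle
`T(x) = {(P, Q) : 0 ≤ P ≤ x, |Q| ≤ P tan φ}` with `x ∈ [0, P_max]` is a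
projection-translation invariant subset of `D = T(P_max)`: for every `v ∈ T(P_max)` and
`u ∈ T(x)`, `u + v − proj_{T(x)}(v) ∈ T(P_max)`, where `proj_{T(x)}` is the nearest-point
projection onto the closed convex set `T(x)`. -/
theorem stmt14 (Pmax : ℝ) (hP : 0 ≤ Pmax) (φ : ℝ) (hφ0 : 0 ≤ φ) (hφ : φ < Real.pi / 2)
    (T : ℝ → Set (EuclideanSpace ℝ (Fin 2)))
    (hT : ∀ x, T x = {p : EuclideanSpace ℝ (Fin 2) |
      0 ≤ p 0 ∧ p 0 ≤ x ∧ |p 1| ≤ p 0 * Real.tan φ})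
    (proj : ℝ → EuclideanSpace ℝ (Fin 2) → EuclideanSpace ℝ (Fin 2))
    (hmem : ∀ x ∈ Set.Icc (0 : ℝ) Pmax, ∀ v, proj x v ∈ T x)
    (hmin : ∀ x ∈ Set.Icc (0 : ℝ) Pmax, ∀ v, ∀ w ∈ T x, ‖v - proj x v‖ ≤ ‖v - w‖) :
    ∀ x ∈ Set.Icc (0 : ℝ) Pmax, ∀ v ∈ T Pmax, ∀ u ∈ T x,
      u + v - proj x v ∈ T Pmax := by
  set t := Real.tan φ with htdef
  have ht : 0 ≤ t := by
    rw [htdef, Real.tan_eq_sin_div_cos]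
    have hsin : 0 ≤ Real.sin φ := Real.sin_nonneg_of_nonneg_of_le_pi hφ0
      (by linarith [Real.pi_pos])
    have hcos : 0 < Real.cos φ := Real.cos_pos_of_mem_Ioo
      ⟨by linarith [Real.pi_pos], hφ⟩
    exact div_nonneg hsin hcos.le
  intro x hx v hv u hu
  obtain ⟨hx0, hxP⟩ := hx
  simp only [hT, Set.mem_setOf_eq] at hv hu ⊢
  obtain ⟨hu0, hux, hu1⟩ := hu
  obtain ⟨hv0, hvP, hv1⟩ := hv
  rcases le_or_gt (v 0) x with hvx | hvx
  · -- v ∈ T x, so proj x v = v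
    have hvTx : v ∈ T x := by rw [hT]; exact ⟨hv0, hvx, hv1⟩
    have h0 : ‖v - proj x v‖ ≤ 0 := by
      simpa using hmin x ⟨hx0, hxP⟩ v v hvTx
    have hpv : proj x v = v := by
      have := le_antisymm h0 (norm_nonneg _)
      have h1 : v - proj x v = 0 := norm_eq_zero.mp this
      have := sub_eq_zero.mp h1
      exact this.symm
    have he : u + v - proj x v = u := by rw [hpv]; abel
    rw [he]
    exact ⟨hu0, hux.trans hxP, hu1⟩
  · have htx : 0 ≤ t * x := mul_nonneg ht hx0
    have hu1' := abs_le.mp hu1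
    have hv1' := abs_le.mp hv1
    -- choose mid = clamp of v 1 to [-(t*x), t*x]
    obtain ⟨mid, hm1, hmVI, hm3⟩ : ∃ mid : ℝ, |mid| ≤ t * x ∧
        (∀ b : ℝ, |b| ≤ t * x → (v 1 - mid) * (b - mid) ≤ 0) ∧
        |u 1 + v 1 - mid| ≤ (u 0 + v 0 - x) * t := by
      rcases le_or_gt (v 1) (t * x) with h1 | h1
      · rcases le_or_gt (-(t * x)) (v 1) with h2 | h2
        · refine ⟨v 1, abs_le.mpr ⟨by linarith, h1⟩, fun b hb => by ring_nf; simp, ?_⟩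
          have he : u 1 + v 1 - v 1 = u 1 := by ring
          rw [he, abs_le]
          constructor <;> nlinarith
        · refine ⟨-(t * x), by rw [abs_neg, abs_of_nonneg htx], fun b hb => ?_, ?_⟩
          · have hb' := abs_le.mp hb
            nlinarith
          · rw [abs_le]; constructor <;> nlinarith
      · refine ⟨t * x, by rw [abs_of_nonneg htx], fun b hb => ?_, ?_⟩
        · have hb' := abs_le.mp hb
          nlinarith
        · rw [abs_le]; constructor <;> nlinarith
    set q : EuclideanSpace ℝ (Fin 2) := (WithLp.equiv 2 (Fin 2 → ℝ)).symm ![x, mid] with hqdef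
    have hq0 : q 0 = x := rfl
    have hq1 : q 1 = mid := rfl
    have hqT : q ∈ T x := by
      rw [hT]
      refine ⟨by rw [hq0]; exact hx0, by rw [hq0], ?_⟩
      rw [hq0, hq1]
      calc |mid| ≤ t * x := hm1
        _ = x * t := mul_comm _ _
    have hp := hmem x ⟨hx0, hxP⟩ v
    rw [hT] at hp
    obtain ⟨hp0, hpx, hp1⟩ := hp
    set a := proj x v 0 with ha
    set b := proj x v 1 with hb
    have haxt : a * t ≤ x * t := mul_le_mul_of_nonneg_right hpx ht
    have hball : |b| ≤ t * x := hp1.trans (by linarith)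
    have hVI2 := hmVI b hball
    have hVI1 : (v 0 - x) * (a - x) ≤ 0 :=
      mul_nonpos_of_nonneg_of_nonpos (by linarith) (by linarith)
    have hnorm : ∀ w : EuclideanSpace ℝ (Fin 2),
        ‖w‖ = Real.sqrt (w 0 ^ 2 + w 1 ^ 2) := by
      intro w
      rw [EuclideanSpace.norm_eq]
      simp [Fin.sum_univ_two, Real.norm_eq_abs, sq_abs]
    have key : (v 0 - a) ^ 2 + (v 1 - b) ^ 2 ≤ (v 0 - x) ^ 2 + (v 1 - mid) ^ 2 := by
      have h := hmin x ⟨hx0, hxP⟩ v q hqT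
      rw [hnorm, hnorm] at h
      have hsub1 : (v - proj x v) 0 = v 0 - a := rfl
      have hsub2 : (v - proj x v) 1 = v 1 - b := rfl
      have hsub3 : (v - q) 0 = v 0 - x := rfl
      have hsub4 : (v - q) 1 = v 1 - mid := rfl
      rw [hsub1, hsub2, hsub3, hsub4] at h
      have h2 := pow_le_pow_left₀ (Real.sqrt_nonneg _) h 2
      rwa [Real.sq_sqrt (by positivity), Real.sq_sqrt (by positivity)] at h2
    obtain ⟨hax, hbm⟩ := stmt14_aux (v 0) (v 1) x mid a b key hVI1 hVI2
    have hc0 : (u + v - proj x v) 0 = u 0 + v 0 - a := rfl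
    have hc1 : (u + v - proj x v) 1 = u 1 + v 1 - b := rfl
    rw [hc0, hc1, hax, hbm]
    refine ⟨by linarith, by linarith, ?_⟩
    calc |u 1 + v 1 - mid| ≤ (u 0 + v 0 - x) * t := hm3
      _ = (u 0 + v 0 - x) * t := rfl
end

section
/- Let P_max ≥ 0 and 0 ≤ φ < π/2, and for x ∈ [0, P_max] define T(x) := {(P, Q) ∈ ℝ² : 0 ≤ P ≤ x and |Q| ≤ P·tan φ}. Let (p_max_k)_{k≥0} be any sequence of nonnegative reals and set I_k := T(min(p_max_k, P_max)). Let (u_req_k)_{k≥1} satisfy u_req_k ∈ I_{k−1} for every k ≥ 1, define e_0 := 0, and recursively u_imp_k := proj_{I_k}(u_req_k − e_{k−1}) and e_k := e_{k−1} + u_imp_k − u_req_k, where proj_{I_k} is the nearest-point projection onto the closed convex set I_k. Then ‖e_k‖ ≤ max{P_max/cos φ, 2·P_max·tan φ} for all k ≥ 1. -/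
section aux

/-- squared norm in `EuclideanSpace ℝ (Fin 2)` -/
private lemma normsq_two (z : EuclideanSpace ℝ (Fin 2)) : ‖z‖^2 = z 0^2 + z 1^2 := by
  rw [EuclideanSpace.norm_eq, Real.sq_sqrt (by positivity)]
  simp [Fin.sum_univ_two, sq_abs]

private lemma norm_le_of_sq_le {z : EuclideanSpace ℝ (Fin 2)} {c : ℝ} (hc : 0 ≤ c)
    (h : ‖z‖^2 ≤ c^2) : ‖z‖ ≤ c := by
  nlinarith [norm_nonneg z]

/-- clamp minimizes squared distance on an interval -/
private lemma clamp_min_sq (l h v c : ℝ) (hc1 : l ≤ c) (hc2 : c ≤ h) :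
    (v - max l (min v h))^2 ≤ (v - c)^2 := by
  rcases le_total v l with hvl | hlv
  · have : min v h = v := min_eq_left (hvl.trans (hc1.trans hc2))
    rw [this, max_eq_left hvl]
    nlinarith
  · rcases le_total h v with hhv | hvh
    · have : min v h = h := min_eq_right hhv
      rw [this, max_eq_right (hc1.trans hc2)]
      nlinarith
    · have : min v h = v := min_eq_left hvh
      rw [this, max_eq_right hlv]
      nlinarith

end aux

set_option maxHeartbeats 2000000 in
/-- Error diffusion for a PV resource agent. With feasible triangles
`I_k = T(min(p_max_k, P_max))` where `T(x) = {(P, Q) : 0 ≤ P ≤ x, |Q| ≤ P tan φ}`,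
persistent-predictor advertisement (`u_req_k ∈ I_{k−1}`) and nearest-point projection,
the accumulated error satisfies `‖e_k‖ ≤ max {P_max/cos φ, 2 P_max tan φ}` for all
`k ≥ 1`. -/
theorem stmt15 (Pmax : ℝ) (hP : 0 ≤ Pmax) (φ : ℝ) (hφ0 : 0 ≤ φ) (hφ : φ < Real.pi / 2)
    (T : ℝ → Set (EuclideanSpace ℝ (Fin 2)))
    (hT : ∀ x, T x = {p : EuclideanSpace ℝ (Fin 2) |
      0 ≤ p 0 ∧ p 0 ≤ x ∧ |p 1| ≤ p 0 * Real.tan φ})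
    (pmax : ℕ → ℝ) (hpmax : ∀ k, 0 ≤ pmax k)
    (I : ℕ → Set (EuclideanSpace ℝ (Fin 2)))
    (hI : ∀ k, I k = T (min (pmax k) Pmax))
    (proj : ℕ → EuclideanSpace ℝ (Fin 2) → EuclideanSpace ℝ (Fin 2))
    (hprojmem : ∀ k v, proj k v ∈ I k)
    (hprojmin : ∀ k v, ∀ w ∈ I k, ‖v - proj k v‖ ≤ ‖v - w‖)
    (u_req u_imp e : ℕ → EuclideanSpace ℝ (Fin 2))
    (hreq : ∀ k : ℕ, 1 ≤ k → u_req k ∈ I (k - 1))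
    (he0 : e 0 = 0)
    (himp : ∀ k : ℕ, 1 ≤ k → u_imp k = proj k (u_req k - e (k - 1)))
    (he : ∀ k : ℕ, 1 ≤ k → e k = e (k - 1) + u_imp k - u_req k) :
    ∀ k : ℕ, 1 ≤ k → ‖e k‖ ≤ max (Pmax / Real.cos φ) (2 * Pmax * Real.tan φ) := by
  set t := Real.tan φ with ht_def
  have hcos : 0 < Real.cos φ := by
    apply Real.cos_pos_of_mem_Ioo
    constructor
    · linarith [Real.pi_pos]
    · exact hφ
  have ht : 0 ≤ t := by
    have hsin : 0 ≤ Real.sin φ := by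
      apply Real.sin_nonneg_of_nonneg_of_le_pi hφ0
      linarith [Real.pi_pos]
    rw [ht_def, Real.tan_eq_sin_div_cos]
    positivity
  have hsec : Real.cos φ ^ 2 * (1 + t^2) = 1 := by
    have hs := Real.sin_sq_add_cos_sq φ
    have hcne : Real.cos φ ≠ 0 := ne_of_gt hcos
    rw [ht_def, Real.tan_eq_sin_div_cos]
    field_simp
    linarith [hs]
  -- membership unfolding
  have hmem : ∀ k (p : EuclideanSpace ℝ (Fin 2)), p ∈ I k ↔
      (0 ≤ p 0 ∧ p 0 ≤ min (pmax k) Pmax ∧ |p 1| ≤ p 0 * t) := by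
    intro k p
    rw [hI k, hT]
    rfl
  -- the invariant: -e k lies in the triangle T (Pmax - min (pmax k) Pmax)
  have key : ∀ k : ℕ, e k 0 ≤ 0 ∧ min (pmax k) Pmax - Pmax ≤ e k 0 ∧
      |e k 1| ≤ (-(e k 0)) * t := by
    intro k
    induction k with
    | zero =>
      rw [he0]
      have h0 : (0 : EuclideanSpace ℝ (Fin 2)) 0 = 0 := rfl
      have h1 : (0 : EuclideanSpace ℝ (Fin 2)) 1 = 0 := rfl
      rw [h0, h1]
      refine ⟨le_refl 0, ?_, by simp⟩
      have := min_le_right (pmax 0) Pmax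
      linarith
    | succ n ih =>
      obtain ⟨ih0, ih1, ih2⟩ := ih
      have hK1 : (1 : ℕ) ≤ n + 1 := Nat.le_add_left 1 n
      have hKsub : n + 1 - 1 = n := rfl
      -- the request point
      have hu := hreq (n+1) hK1
      rw [hKsub] at hu
      rw [hmem n] at hu
      obtain ⟨hu0, hux, hu1⟩ := hu
      have hxP : min (pmax n) Pmax ≤ Pmax := min_le_right _ _
      set y := min (pmax (n+1)) Pmax with hy_def
      have hy0 : 0 ≤ y := le_min (hpmax (n+1)) hP
      have hyP : y ≤ Pmax := min_le_right _ _
      set v : EuclideanSpace ℝ (Fin 2) := u_req (n+1) - e n with hv_def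
      have hv0' : v 0 = u_req (n+1) 0 - e n 0 := rfl
      have hv1' : v 1 = u_req (n+1) 1 - e n 1 := rfl
      have hv00 : 0 ≤ v 0 := by rw [hv0']; linarith only [hu0, ih0]
      have hv0P : v 0 ≤ Pmax := by rw [hv0']; linarith only [hux, ih1, hxP]
      have hv1 : |v 1| ≤ v 0 * t := by
        rw [hv1', hv0']
        have habs : |u_req (n+1) 1 - e n 1| ≤ |u_req (n+1) 1| + |e n 1| := abs_sub _ _
        linarith only [habs, hu1, ih2]
      have hv1a : v 1 ≤ v 0 * t := le_trans (le_abs_self _) hv1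
      have hv1b : -(v 0 * t) ≤ v 1 := by
        have h := neg_abs_le (v 1); linarith only [h, hv1]
      -- the explicit nearest point w
      set w0 : ℝ := min (v 0) y with hw0_def
      set w1 : ℝ := max (-(w0 * t)) (min (v 1) (w0 * t)) with hw1_def
      set w : EuclideanSpace ℝ (Fin 2) := (WithLp.equiv 2 (Fin 2 → ℝ)).symm ![w0, w1]
        with hw_def
      have hwc0 : w 0 = w0 := rfl
      have hwc1 : w 1 = w1 := rfl
      have hw00 : 0 ≤ w0 := le_min hv00 hy0
      have hw0y : w0 ≤ y := min_le_right _ _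
      have hw0v : w0 ≤ v 0 := min_le_left _ _
      have hw0t : 0 ≤ w0 * t := mul_nonneg hw00 ht
      have hw1abs : |w1| ≤ w0 * t := by
        rw [abs_le]
        refine ⟨le_max_left _ _, ?_⟩
        apply max_le
        · linarith only [hw0t]
        · exact min_le_right _ _
      have hwmem : w ∈ I (n+1) := by
        rw [hmem, hwc0, hwc1]
        exact ⟨hw00, hw0y, hw1abs⟩
      -- when v 0 ≤ y, w = v in second coordinate too
      have hw1v : v 0 ≤ y → w1 = v 1 := by
        intro hvy
        have hw0 : w0 = v 0 := min_eq_left hvy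
        rw [hw1_def, hw0, min_eq_left hv1a, max_eq_right hv1b]
      -- minimality of w
      have hminw : ∀ c ∈ I (n+1), ‖v - w‖ ≤ ‖v - c‖ := by
        intro c hc
        rw [hmem] at hc
        obtain ⟨hc0, hcy, hc1⟩ := hc
        rw [← hy_def] at hcy
        have hd0 : (v 0 - w 0)^2 ≤ (v 0 - c 0)^2 := by
          rw [hwc0, hw0_def]
          rcases le_total (v 0) y with hvy | hyv
          · rw [min_eq_left hvy]
            have := sq_nonneg (v 0 - c 0)
            nlinarith [this]
          · rw [min_eq_right hyv]
            have hvc : c 0 ≤ v 0 := le_trans hcy hyv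
            nlinarith [hcy, hyv, hvc]
        have hd1 : (v 1 - w 1)^2 ≤ (v 1 - c 1)^2 := by
          rw [hwc1]
          rcases le_total (v 0) y with hvy | hyv
          · rw [hw1v hvy]
            have := sq_nonneg (v 1 - c 1)
            nlinarith [this]
          · have hw0 : w0 = y := min_eq_right hyv
            have hct : c 0 * t ≤ w0 * t := by
              rw [hw0]; exact mul_le_mul_of_nonneg_right hcy ht
            have hna := neg_abs_le (c 1)
            have hla := le_abs_self (c 1)
            rw [hw1_def]
            apply clamp_min_sq
            · linarith only [hct, hna, hc1]
            · linarith only [hct, hla, hc1]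
        have hsq : ‖v - w‖^2 ≤ ‖v - c‖^2 := by
          rw [normsq_two, normsq_two]
          have e1 : (v - w) 0 = v 0 - w 0 := rfl
          have e2 : (v - w) 1 = v 1 - w 1 := rfl
          have e3 : (v - c) 0 = v 0 - c 0 := rfl
          have e4 : (v - c) 1 = v 1 - c 1 := rfl
          rw [e1, e2, e3, e4]
          linarith only [hd0, hd1]
        have hs := Real.sqrt_le_sqrt hsq
        rwa [Real.sqrt_sq (norm_nonneg _), Real.sqrt_sq (norm_nonneg _)] at hs
      -- uniqueness: proj (n+1) v = w
      have hproj_eq : proj (n+1) v = w := by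
        set p := proj (n+1) v with hp_def
        have hpmem := hprojmem (n+1) v
        have h1 : ‖v - p‖ ≤ ‖v - w‖ := hprojmin (n+1) v w hwmem
        have h2 : ‖v - w‖ ≤ ‖v - p‖ := hminw p hpmem
        have heq : ‖v - p‖ = ‖v - w‖ := le_antisymm h1 h2
        -- midpoint
        set m : EuclideanSpace ℝ (Fin 2) := (2:ℝ)⁻¹ • (p + w) with hm_def
        have hmmem : m ∈ I (n+1) := by
          rw [hmem] at hpmem ⊢
          obtain ⟨hp0, hpy, hp1⟩ := hpmem
          rw [← hy_def] at hpy
          have hm0 : m 0 = (2:ℝ)⁻¹ * (p 0 + w 0) := rfl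
          have hm1 : m 1 = (2:ℝ)⁻¹ * (p 1 + w 1) := rfl
          rw [hm0, hm1, hwc0, hwc1, ← hy_def]
          refine ⟨by linarith only [hp0, hw00], by linarith only [hpy, hw0y], ?_⟩
          have habs : |p 1 + w1| ≤ |p 1| + |w1| := abs_add_le _ _
          have h2' : |(2:ℝ)⁻¹ * (p 1 + w1)| = (2:ℝ)⁻¹ * |p 1 + w1| := by
            rw [abs_mul]; norm_num
          rw [h2']
          linarith only [habs, hp1, hw1abs]
        have h3 : ‖v - p‖ ≤ ‖v - m‖ := hprojmin (n+1) v m hmmem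
        have hab : v - m = (2:ℝ)⁻¹ • ((v - p) + (v - w)) := by
          rw [hm_def]
          ext i
          simp only [PiLp.sub_apply, PiLp.add_apply, PiLp.smul_apply, smul_eq_mul]
          ring
        have hnm : ‖v - m‖ = (2:ℝ)⁻¹ * ‖(v - p) + (v - w)‖ := by
          rw [hab, norm_smul]
          norm_num
        have hpar := parallelogram_law_with_norm ℝ (v - p) (v - w)
        have hsub : (v - p) - (v - w) = w - p := by abel
        rw [hsub] at hpar
        have h4 : 2 * ‖v - p‖ ≤ ‖(v - p) + (v - w)‖ := by
          rw [hnm] at h3; linarith only [h3]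
        have hnn := norm_nonneg (w - p)
        have hwp : ‖w - p‖ ≤ 0 := by
          nlinarith only [hpar, heq, h4, norm_nonneg (v - p), hnn]
        have h5 : w - p = 0 := norm_eq_zero.mp (le_antisymm hwp hnn)
        have h6 : w = p := sub_eq_zero.mp h5
        exact h6.symm
      -- now compute e (n+1) = w - v
      have he_eq : e (n+1) = w - v := by
        have h1 := he (n+1) hK1
        have h2 := himp (n+1) hK1
        rw [hKsub] at h1 h2
        rw [← hv_def] at h2
        rw [h1, h2, hproj_eq, hv_def]
        abel
      have he0' : e (n+1) 0 = w0 - v 0 := by rw [he_eq]; rfl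
      have he1' : e (n+1) 1 = w1 - v 1 := by rw [he_eq]; rfl
      refine ⟨?_, ?_, ?_⟩
      · rw [he0']; linarith only [hw0v]
      · rw [he0']
        have h : y - v 0 ≤ w0 - v 0 ∨ (0:ℝ) ≤ w0 - v 0 := by
          rw [hw0_def]
          rcases le_total (v 0) y with h | h
          · right
            rw [min_eq_left h, sub_self]
          · left; rw [min_eq_right h]
        rcases h with h | h
        · linarith only [h, hv0P]
        · linarith only [h, hy0, hyP, hv00]
      · rw [he0', he1']
        rcases le_total (v 0) y with hvy | hyv
        · have hw0 : w0 = v 0 := min_eq_left hvy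
          rw [hw1v hvy, hw0, sub_self, sub_self]
          simp
        · have hw0 : w0 = y := min_eq_right hyv
          have hvyt : y * t ≤ v 0 * t := mul_le_mul_of_nonneg_right hyv ht
          have hub : w1 ≤ v 1 ∨ w1 = -(y * t) := by
            rw [hw1_def, hw0]
            rcases le_total (-(y*t)) (min (v 1) (y * t)) with h | h
            · left
              rw [max_eq_right h]
              exact min_le_left _ _
            · right; rw [max_eq_left h]
          have hlb : v 1 - (v 0 - y) * t ≤ w1 := by
            have h1 : v 1 - (v 0 - y) * t ≤ min (v 1) (y * t) := by
              apply le_min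
              · have h2 : 0 ≤ (v 0 - y) * t := mul_nonneg (by linarith only [hyv]) ht
                linarith only [h2]
              · linarith only [hv1a]
            have h2 : min (v 1) (y * t) ≤ w1 := by
              rw [hw1_def, hw0]; exact le_max_right _ _
            linarith only [h1, h2]
          rw [abs_le, hw0]
          constructor
          · linarith only [hlb]
          · rcases hub with h | h
            · linarith only [h, hvyt]
            · rw [h]; linarith only [hv1b, hvyt]
  -- conclude
  intro k _
  obtain ⟨h0, h1, h2⟩ := key k
  have hmin0 : 0 ≤ min (pmax k) Pmax := le_min (hpmax k) hP
  have habs0 : -(e k 0) ≤ Pmax := by linarith only [h1, hmin0]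
  have hd : 0 ≤ Pmax / Real.cos φ := by positivity
  have hcos2 : (0:ℝ) < Real.cos φ ^ 2 := by positivity
  have hn2 : ‖e k‖^2 ≤ (Pmax / Real.cos φ)^2 := by
    rw [normsq_two]
    have h3 : (e k 1)^2 ≤ ((-(e k 0)) * t)^2 := by
      have ha := abs_nonneg (e k 1)
      have hb := sq_abs (e k 1)
      nlinarith only [h2, ha, hb]
    have he2 : (e k 0)^2 ≤ Pmax^2 := by nlinarith only [habs0, h0, hP]
    have h4 : (e k 0)^2 * (1 + t^2) ≤ Pmax^2 * (1 + t^2) := by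
      nlinarith only [he2, sq_nonneg t]
    have h5 : (Pmax / Real.cos φ)^2 = Pmax^2 * (1 + t^2) := by
      rw [div_pow, div_eq_iff (ne_of_gt hcos2)]
      linear_combination (-(Pmax^2)) * hsec
    rw [h5]
    nlinarith only [h3, h4]
  exact le_trans (norm_le_of_sq_le hd hn2) (le_max_left _ _)
end

section
/- Let G ⊆ ℝ² be a bounded nonempty closed set with 0 ∈ G and G = −G. For every k ≥ 1, let I_k ⊆ ℝ² be a bounded nonempty closed set, let A_k := conv(I_k), let D_k := A_k + G (Minkowski sum), and let F_k : D_k → I_k be a G-approximation map, i.e., F_k(x) − x ∈ G for all x ∈ D_k. Let (u_req_k)_{k≥1} satisfy u_req_k ∈ A_k for every k, define e_0 := 0, and recursively u_imp_k := F_k(u_req_k − e_{k−1}) and e_k := e_{k−1} + u_imp_k − u_req_k. Then u_req_k − e_{k−1} ∈ D_k and e_k ∈ G for all k ≥ 1 (the resource agent has G-contained accumulated error). -/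
open Pointwise

/-- `G`-contained accumulated error for deterministic resources. Let
`G ⊆ ℝ²` be bounded, nonempty, closed, with `0 ∈ G` and `G = −G`. For each `k ≥ 1`, let
`I_k` be bounded nonempty closed, `A_k = conv(I_k)`, `D_k = A_k + G` (Minkowski sum), and
let `F_k : D_k → I_k` be a `G`-approximation map. If the agent implements
`u_imp_k = F_k(u_req_k − e_{k−1})` for requests `u_req_k ∈ A_k` (with
`e_k = e_{k−1} + u_imp_k − u_req_k`, `e_0 = 0`), then `u_req_k − e_{k−1} ∈ D_k` and
`e_k ∈ G` for all `k ≥ 1`. -/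
theorem stmt17 (G : Set (EuclideanSpace ℝ (Fin 2)))
    (hGne : G.Nonempty) (hGbdd : Bornology.IsBounded G) (hGcl : IsClosed G)
    (hG0 : (0 : EuclideanSpace ℝ (Fin 2)) ∈ G) (hGsymm : G = -G)
    (I : ℕ → Set (EuclideanSpace ℝ (Fin 2)))
    (hIne : ∀ k : ℕ, 1 ≤ k → (I k).Nonempty)
    (hIbdd : ∀ k : ℕ, 1 ≤ k → Bornology.IsBounded (I k))
    (hIcl : ∀ k : ℕ, 1 ≤ k → IsClosed (I k))
    (A : ℕ → Set (EuclideanSpace ℝ (Fin 2)))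
    (hA : ∀ k : ℕ, 1 ≤ k → A k = convexHull ℝ (I k))
    (D : ℕ → Set (EuclideanSpace ℝ (Fin 2)))
    (hD : ∀ k : ℕ, 1 ≤ k → D k = A k + G)
    (F : ℕ → EuclideanSpace ℝ (Fin 2) → EuclideanSpace ℝ (Fin 2))
    (hFI : ∀ k : ℕ, 1 ≤ k → ∀ x ∈ D k, F k x ∈ I k)
    (happrox : ∀ k : ℕ, 1 ≤ k → ∀ x ∈ D k, F k x - x ∈ G)
    (u_req u_imp e : ℕ → EuclideanSpace ℝ (Fin 2))
    (hreq : ∀ k : ℕ, 1 ≤ k → u_req k ∈ A k)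
    (he0 : e 0 = 0)
    (himp : ∀ k : ℕ, 1 ≤ k → u_imp k = F k (u_req k - e (k - 1)))
    (he : ∀ k : ℕ, 1 ≤ k → e k = e (k - 1) + u_imp k - u_req k) :
    ∀ k : ℕ, 1 ≤ k → u_req k - e (k - 1) ∈ D k ∧ e k ∈ G := by
  have key : ∀ k : ℕ, e k ∈ G ∧ (1 ≤ k → u_req k - e (k - 1) ∈ D k) := by
    intro k
    induction k with
    | zero => exact ⟨he0 ▸ hG0, by omega⟩
    | succ n ih =>
      have hk : 1 ≤ n + 1 := Nat.le_add_left 1 n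
      have hen : e n ∈ G := ih.1
      have hx : u_req (n + 1) - e (n + 1 - 1) ∈ D (n + 1) := by
        rw [hD (n + 1) hk]
        simp only [Nat.add_sub_cancel]
        have hneg : -e n ∈ G := by rw [hGsymm]; exact Set.neg_mem_neg.mpr hen
        exact ⟨u_req (n + 1), hreq (n + 1) hk, -e n, hneg, by abel⟩
      refine ⟨?_, fun _ => hx⟩
      have := happrox (n + 1) hk _ hx
      have heq : e (n + 1) = F (n + 1) (u_req (n + 1) - e (n + 1 - 1)) -
          (u_req (n + 1) - e (n + 1 - 1)) := by
        rw [he (n + 1) hk, himp (n + 1) hk]; abel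
      rw [heq]; exact this
  exact fun k hk => ⟨(key k).2 hk, (key k).1⟩
end
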